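/- Let M denote the dyadic maximal operator on ℝ, M f(x) = sup { |I|^{-1} ∫_I f : I a dyadic interval with x ∈ I }. Let g = 1_{[0,3)} + 1_{[5,8)} and h = 1_{[2,3)} + 1_{[5,6)}. Then var_ℝ (M g) = 5/2, var_ℝ (M h) = 3, and var_ℝ (M(g+h)) = 6; in particular var_ℝ (M(g+h)) > var_ℝ (M g) + var_ℝ (M h), so the functional f ↦ var_ℝ (M f) is not subadditive. -/

import Mathlib

open MeasureTheory Metric Set Filter
open scoped ENNReal Topology

noncomputable section

/-- A dyadic interval `[2^n m, 2^n (m+1))` in `ℝ`. -/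
def IsDyadicInterval (I : Set ℝ) : Prop :=
  ∃ n m : ℤ, I = Set.Ico ((2:ℝ)^n * m) ((2:ℝ)^n * (m + 1))

/-- The dyadic maximal operator on `ℝ`:
`M f(x) = sup { |I|⁻¹ ∫_I f : I dyadic interval, x ∈ I }`. -/
def dyadicMax1 (f : ℝ → ℝ) (x : ℝ) : ℝ :=
  sSup {y : ℝ | ∃ I : Set ℝ, IsDyadicInterval I ∧ x ∈ I ∧ y = ⨍ z in I, f z}

/-- The variation of `f` in an open set `U ⊆ ℝ`:
`var_U f = sup { ∫_U f · φ' : φ ∈ C¹_c(U), |φ| ≤ 1 }`. -/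
def var1 (U : Set ℝ) (f : ℝ → ℝ) : ℝ≥0∞ :=
  ⨆ φ ∈ {φ : ℝ → ℝ | ContDiff ℝ 1 φ ∧ HasCompactSupport φ ∧ tsupport φ ⊆ U ∧
      ∀ x, |φ x| ≤ 1},
    ENNReal.ofReal (∫ x in U, f x * deriv φ x)

/-! ### basic average lemmas -/

lemma avg_Ico (f : ℝ → ℝ) {a b : ℝ} (h : a < b) :
    ⨍ z in Set.Ico a b, f z = (b-a)⁻¹ * ∫ z in Set.Ico a b, f z := by
  rw [setAverage_eq]
  rw [measureReal_def, Real.volume_Ico, ENNReal.toReal_ofReal (by linarith)]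
  simp [smul_eq_mul]

lemma avg_const_on (f : ℝ → ℝ) {a b c : ℝ} (h : a < b) (hf : ∀ z ∈ Set.Ico a b, f z = c) :
    ⨍ z in Set.Ico a b, f z = c := by
  rw [avg_Ico f h, setIntegral_congr_fun measurableSet_Ico hf, setIntegral_const,
    measureReal_def, Real.volume_Ico, ENNReal.toReal_ofReal (by linarith)]
  rw [smul_eq_mul, inv_mul_cancel_left₀ (by linarith)]

lemma avg_le_bound (f : ℝ → ℝ) {a b C : ℝ} (h : a < b) (hint : Integrable f)
    (hC : ∀ z, f z ≤ C) : ⨍ z in Set.Ico a b, f z ≤ C := by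
  rw [avg_Ico f h]
  have h1 : ∫ z in Set.Ico a b, f z ≤ ∫ _ in Set.Ico a b, C := by
    apply setIntegral_mono_on hint.integrableOn (integrableOn_const measure_Ico_lt_top.ne)
      measurableSet_Ico (fun z _ => hC z)
  have h2 : ∫ _ in Set.Ico a b, C = (b-a) * C := by
    rw [setIntegral_const, measureReal_def, Real.volume_Ico, ENNReal.toReal_ofReal (by linarith), smul_eq_mul]
  rw [inv_mul_le_iff₀ (by linarith)]
  rw [h2] at h1
  linarith

lemma avg_nonneg_Ico (f : ℝ → ℝ) {a b : ℝ} (hnn : ∀ z, 0 ≤ f z) (h : a < b) :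
    0 ≤ ⨍ z in Set.Ico a b, f z := by
  rw [avg_Ico f h]
  have : (0:ℝ) ≤ (b-a)⁻¹ := inv_nonneg.2 (by linarith)
  exact mul_nonneg this (setIntegral_nonneg measurableSet_Ico fun z _ => hnn z)

/-! ### dyadic interval lemmas -/

lemma two_zpow_pos (n : ℤ) : (0:ℝ) < 2^n := by positivity

lemma two_zpow_ge8 {n : ℤ} (hn : 3 ≤ n) : (8:ℝ) ≤ 2^n := by
  calc (8:ℝ) = 2^(3:ℤ) := by norm_num
  _ ≤ 2^n := by apply zpow_le_zpow_right₀ one_le_two hn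

lemma dyadic_m_eq {n m m' : ℤ} {x : ℝ} (hx1 : (2:ℝ)^n * m ≤ x) (hx2 : x < (2:ℝ)^n * (m+1))
    (h1 : (2:ℝ)^n * m' ≤ x) (h2 : x < (2:ℝ)^n * (m'+1)) : m = m' := by
  have hp : (0:ℝ) < 2^n := two_zpow_pos n
  have e1 : (m:ℝ) < (m':ℝ) + 1 := by
    have := lt_of_le_of_lt hx1 h2
    exact (mul_lt_mul_iff_right₀ hp).mp this
  have e2 : (m':ℝ) < (m:ℝ) + 1 := (mul_lt_mul_iff_right₀ hp).mp (lt_of_le_of_lt h1 hx2)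
  have i1 : m < m' + 1 := by exact_mod_cast e1
  have i2 : m' < m + 1 := by exact_mod_cast e2
  omega

lemma dyadic_subset {n k m j : ℤ} (hnk : n ≤ k) {x : ℝ}
    (h1 : x ∈ Set.Ico ((2:ℝ)^n*m) ((2:ℝ)^n*(m+1)))
    (h2 : x ∈ Set.Ico ((2:ℝ)^k*j) ((2:ℝ)^k*(j+1))) :
    Set.Ico ((2:ℝ)^n*m) ((2:ℝ)^n*(m+1)) ⊆ Set.Ico ((2:ℝ)^k*j) ((2:ℝ)^k*(j+1)) := by
  obtain ⟨hx1, hx2⟩ := h1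
  obtain ⟨hy1, hy2⟩ := h2
  have hp : (0:ℝ) < 2^n := two_zpow_pos n
  set D : ℤ := 2^((k-n).toNat) with hDdef
  have hD : (2:ℝ)^k = (2:ℝ)^n * (D:ℝ) := by
    have : ((D:ℤ):ℝ) = (2:ℝ)^((k-n).toNat) := by push_cast [hDdef]; norm_num
    rw [this, ← zpow_natCast (2:ℝ) ((k-n).toNat), Int.toNat_of_nonneg (by omega),
      ← zpow_add₀ (two_ne_zero) n (k-n)]
    ring_nf
  have hy1' : (2:ℝ)^n * ((D*j : ℤ):ℝ) ≤ x := by push_cast; rw [← mul_assoc, ← hD]; exact hy1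
  have hy2' : x < (2:ℝ)^n * ((D*(j+1) : ℤ):ℝ) := by
    push_cast; rw [show (2:ℝ)^n * ((D:ℝ)*((j:ℝ)+1)) = 2^n*(D:ℝ)*((j:ℝ)+1) by ring, ← hD]
    exact_mod_cast hy2
  have i1 : D*j ≤ m := by
    have : (↑(D*j):ℝ) < (m:ℝ)+1 := (mul_lt_mul_iff_right₀ hp).mp (lt_of_le_of_lt hy1' hx2)
    have : D*j < m+1 := by exact_mod_cast this
    omega
  have i2 : m+1 ≤ D*(j+1) := by
    have : (m:ℝ) < (↑(D*(j+1)):ℝ) := (mul_lt_mul_iff_right₀ hp).mp (lt_of_le_of_lt hx1 hy2')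
    have : m < D*(j+1) := by exact_mod_cast this
    omega
  intro z hz
  obtain ⟨hz1, hz2⟩ := hz
  constructor
  · calc (2:ℝ)^k*j = (2:ℝ)^n * ((D*j:ℤ):ℝ) := by push_cast; rw [hD]; ring
    _ ≤ (2:ℝ)^n * (m:ℝ) := by
        apply mul_le_mul_of_nonneg_left _ hp.le
        exact_mod_cast Int.cast_le.mpr i1
    _ ≤ z := hz1
  · calc z < (2:ℝ)^n * ((m:ℝ)+1) := hz2
    _ ≤ (2:ℝ)^n * ((D*(j+1):ℤ):ℝ) := by
        apply mul_le_mul_of_nonneg_left _ hp.le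
        have : ((m:ℝ)+1) = ((m+1 : ℤ):ℝ) := by push_cast; ring
        rw [this]
        exact_mod_cast Int.cast_le.mpr i2
    _ = (2:ℝ)^k*((j:ℝ)+1) := by push_cast; rw [hD]; ring

lemma dyadic_classify {n m : ℤ} {x : ℝ} (hx : x ∈ Set.Ico ((2:ℝ)^n*m) ((2:ℝ)^n*(m+1)))
    (p : ℤ) (hp0 : 0 ≤ p) (hp7 : p < 8) (hxp : (p:ℝ) ≤ x) (hxp1 : x < (p:ℝ)+1) :
    (n ≤ 0 ∧ Set.Ico ((2:ℝ)^n*m) ((2:ℝ)^n*(m+1)) ⊆ Set.Ico (p:ℝ) ((p:ℝ)+1)) ∨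
    (n = 1 ∧ m = p/2) ∨ (n = 2 ∧ m = p/4) ∨ (3 ≤ n ∧ m = 0) := by
  have hxcell : x ∈ Set.Ico ((2:ℝ)^(0:ℤ)*p) ((2:ℝ)^(0:ℤ)*(p+1)) := by
    simp only [zpow_zero, one_mul]
    exact ⟨hxp, hxp1⟩
  rcases le_or_gt n 0 with hn | hn
  · left
    refine ⟨hn, ?_⟩
    have := dyadic_subset hn hx hxcell
    simpa using this
  rcases lt_or_ge n 2 with hn2 | hn2
  · right; left
    have hn1 : n = 1 := by omega
    subst hn1
    refine ⟨rfl, ?_⟩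
    apply dyadic_m_eq hx.1 hx.2
    · have hd : (2*(p/2) : ℤ) ≤ p := by omega
      calc (2:ℝ)^(1:ℤ) * ((p/2 : ℤ):ℝ) = ((2*(p/2) : ℤ):ℝ) := by push_cast; ring
      _ ≤ (p:ℝ) := by exact_mod_cast hd
      _ ≤ x := hxp
    · have hd : (p+1 : ℤ) ≤ 2*(p/2)+2 := by omega
      calc x < (p:ℝ)+1 := hxp1
      _ = ((p+1 : ℤ):ℝ) := by push_cast; ring
      _ ≤ ((2*(p/2)+2 : ℤ):ℝ) := by exact_mod_cast hd
      _ = (2:ℝ)^(1:ℤ) * (((p/2 : ℤ):ℝ)+1) := by push_cast; ring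
  rcases lt_or_ge n 3 with hn3 | hn3
  · right; right; left
    have hn2' : n = 2 := by omega
    subst hn2'
    refine ⟨rfl, ?_⟩
    apply dyadic_m_eq hx.1 hx.2
    · have hd : (4*(p/4) : ℤ) ≤ p := by omega
      calc (2:ℝ)^(2:ℤ) * ((p/4 : ℤ):ℝ) = ((4*(p/4) : ℤ):ℝ) := by push_cast; norm_num; try ring
      _ ≤ (p:ℝ) := by exact_mod_cast hd
      _ ≤ x := hxp
    · have hd : (p+1 : ℤ) ≤ 4*(p/4)+4 := by omega
      calc x < (p:ℝ)+1 := hxp1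
      _ = ((p+1 : ℤ):ℝ) := by push_cast; ring
      _ ≤ ((4*(p/4)+4 : ℤ):ℝ) := by exact_mod_cast hd
      _ = (2:ℝ)^(2:ℤ) * (((p/4 : ℤ):ℝ)+1) := by push_cast; norm_num; try ring
  · right; right; right
    refine ⟨hn3, ?_⟩
    apply dyadic_m_eq hx.1 hx.2
    · simpa using le_trans (by exact_mod_cast hp0) hxp
    · have hd : (p+1 : ℤ) ≤ 8 := by omega
      calc x < (p:ℝ)+1 := hxp1
      _ = ((p+1:ℤ):ℝ) := by push_cast; ring
      _ ≤ ((8:ℤ):ℝ) := by exact_mod_cast hd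
      _ = 8 := by norm_num
      _ ≤ (2:ℝ)^n := two_zpow_ge8 hn3
      _ = (2:ℝ)^n * (((0:ℤ):ℝ)+1) := by norm_num

lemma dmax_eq {f : ℝ → ℝ} {x v : ℝ}
    (hmem : ∃ n m : ℤ, x ∈ Set.Ico ((2:ℝ)^n*m) ((2:ℝ)^n*(m+1)) ∧
      v = ⨍ z in Set.Ico ((2:ℝ)^n*m) ((2:ℝ)^n*(m+1)), f z)
    (hub : ∀ n m : ℤ, x ∈ Set.Ico ((2:ℝ)^n*m) ((2:ℝ)^n*(m+1)) →
      (⨍ z in Set.Ico ((2:ℝ)^n*m) ((2:ℝ)^n*(m+1)), f z) ≤ v) :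
    dyadicMax1 f x = v := by
  apply IsGreatest.csSup_eq
  constructor
  · obtain ⟨n, m, h1, h2⟩ := hmem
    exact ⟨_, ⟨n, m, rfl⟩, h1, h2⟩
  · rintro y ⟨I, ⟨n, m, rfl⟩, hxI, rfl⟩
    exact hub n m hxI

lemma dmax_neg {f : ℝ → ℝ} (hneg : ∀ z, z < 0 → f z = 0) {x : ℝ} (hx : x < 0) :
    dyadicMax1 f x = 0 := by
  have key : ∀ n m : ℤ, x ∈ Set.Ico ((2:ℝ)^n*m) ((2:ℝ)^n*(m+1)) →
      (⨍ z in Set.Ico ((2:ℝ)^n*m) ((2:ℝ)^n*(m+1)), f z) = 0 := by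
    intro n m ⟨h1, h2⟩
    have hp : (0:ℝ) < 2^n := two_zpow_pos n
    have hm : (m:ℝ) < 0 := by
      by_contra hc
      push_neg at hc
      have : (0:ℝ) ≤ 2^n * m := mul_nonneg hp.le hc
      linarith
    have hm1 : (m:ℝ) + 1 ≤ 0 := by
      have : (m:ℤ) < 0 := by exact_mod_cast hm
      have : (m:ℤ) + 1 ≤ 0 := by omega
      exact_mod_cast this
    apply avg_const_on f (lt_of_le_of_lt h1 h2)
    intro z ⟨_, hz2⟩
    apply hneg
    calc z < (2:ℝ)^n * ((m:ℝ)+1) := hz2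
    _ ≤ 0 := mul_nonpos_of_nonneg_of_nonpos hp.le hm1
  apply dmax_eq
  · refine ⟨0, ⌊x⌋, ?_, ?_⟩
    · simp only [zpow_zero, one_mul]
      exact ⟨Int.floor_le x, by push_cast; exact Int.lt_floor_add_one x⟩
    · rw [key 0 ⌊x⌋ (by simp only [zpow_zero, one_mul]; exact ⟨Int.floor_le x, by push_cast; exact Int.lt_floor_add_one x⟩)]
  · intro n m h
    rw [key n m h]

/-! ### the concrete functions -/

def gg : ℝ → ℝ := (Set.Ico (0:ℝ) 3).indicator 1 + (Set.Ico (5:ℝ) 8).indicator 1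
def hh : ℝ → ℝ := (Set.Ico (2:ℝ) 3).indicator 1 + (Set.Ico (5:ℝ) 6).indicator 1

lemma gg_def (z : ℝ) : gg z = (if 0 ≤ z ∧ z < 3 then (1:ℝ) else 0) + (if 5 ≤ z ∧ z < 8 then 1 else 0) := by
  simp [gg, Set.indicator_apply, Set.mem_Ico]

lemma hh_def (z : ℝ) : hh z = (if 2 ≤ z ∧ z < 3 then (1:ℝ) else 0) + (if 5 ≤ z ∧ z < 6 then 1 else 0) := by
  simp [hh, Set.indicator_apply, Set.mem_Ico]

lemma gg_nonneg (z : ℝ) : 0 ≤ gg z := by rw [gg_def]; split_ifs <;> norm_num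
lemma hh_nonneg (z : ℝ) : 0 ≤ hh z := by rw [hh_def]; split_ifs <;> norm_num
lemma gg_le_one (z : ℝ) : gg z ≤ 1 := by
  rw [gg_def]
  split_ifs with h1 h2 h3
  · linarith [h1.2, h2.1]
  · norm_num
  · norm_num
  · norm_num
lemma hh_le_one (z : ℝ) : hh z ≤ 1 := by
  rw [hh_def]
  split_ifs with h1 h2 h3
  · linarith [h1.2, h2.1]
  · norm_num
  · norm_num
  · norm_num
lemma gg_zero_ge8 (z : ℝ) (h : (8:ℝ) ≤ z) : gg z = 0 := by
  rw [gg_def]; rw [if_neg (by rintro ⟨_, h2⟩; linarith), if_neg (by rintro ⟨_, h2⟩; linarith)]; norm_num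
lemma hh_zero_ge8 (z : ℝ) (h : (8:ℝ) ≤ z) : hh z = 0 := by
  rw [hh_def]; rw [if_neg (by rintro ⟨_, h2⟩; linarith), if_neg (by rintro ⟨_, h2⟩; linarith)]; norm_num
lemma gg_zero_neg (z : ℝ) (h : z < 0) : gg z = 0 := by
  rw [gg_def]; rw [if_neg (by rintro ⟨h1, _⟩; linarith), if_neg (by rintro ⟨h1, _⟩; linarith)]; norm_num
lemma hh_zero_neg (z : ℝ) (h : z < 0) : hh z = 0 := by
  rw [hh_def]; rw [if_neg (by rintro ⟨h1, _⟩; linarith), if_neg (by rintro ⟨h1, _⟩; linarith)]; norm_num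

lemma ind_integrable (c d : ℝ) : Integrable ((Set.Ico c d).indicator (1:ℝ→ℝ)) := by
  rw [integrable_indicator_iff measurableSet_Ico]
  exact integrableOn_const measure_Ico_lt_top.ne

lemma gg_int : Integrable gg := (ind_integrable 0 3).add (ind_integrable 5 8)
lemma hh_int : Integrable hh := (ind_integrable 2 3).add (ind_integrable 5 6)

lemma int_ind (a b c d : ℝ) :
    ∫ z in Set.Ico a b, (Set.Ico c d).indicator (1:ℝ→ℝ) z = max (min b d - max a c) 0 := by
  rw [setIntegral_indicator measurableSet_Ico]
  have : Set.Ico a b ∩ Set.Ico c d = Set.Ico (max a c) (min b d) := Set.Ico_inter_Ico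
  rw [this]
  simp only [Pi.one_apply]
  rw [setIntegral_const, measureReal_def, Real.volume_Ico, smul_eq_mul, mul_one]
  rcases le_total (min b d) (max a c) with h | h
  · have h0 : b ⊓ d - a ⊔ c ≤ 0 := by linarith
    rw [ENNReal.ofReal_of_nonpos h0, ENNReal.toReal_zero, max_eq_right h0]
  · have h0 : (0:ℝ) ≤ b ⊓ d - a ⊔ c := by linarith
    rw [ENNReal.toReal_ofReal h0, max_eq_left h0]

lemma int_gg (a b : ℝ) : ∫ z in Set.Ico a b, gg z
    = max (min b 3 - max a 0) 0 + max (min b 8 - max a 5) 0 := by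
  have : ∀ z, gg z = (Set.Ico (0:ℝ) 3).indicator (1:ℝ→ℝ) z + (Set.Ico (5:ℝ) 8).indicator (1:ℝ→ℝ) z :=
    fun z => rfl
  rw [setIntegral_congr_fun measurableSet_Ico (fun z _ => this z),
    integral_add ((ind_integrable 0 3).integrableOn) ((ind_integrable 5 8).integrableOn),
    int_ind, int_ind]

lemma int_hh (a b : ℝ) : ∫ z in Set.Ico a b, hh z
    = max (min b 3 - max a 2) 0 + max (min b 6 - max a 5) 0 := by
  have : ∀ z, hh z = (Set.Ico (2:ℝ) 3).indicator (1:ℝ→ℝ) z + (Set.Ico (5:ℝ) 6).indicator (1:ℝ→ℝ) z :=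
    fun z => rfl
  rw [setIntegral_congr_fun measurableSet_Ico (fun z _ => this z),
    integral_add ((ind_integrable 2 3).integrableOn) ((ind_integrable 5 6).integrableOn),
    int_ind, int_ind]

lemma int_ggh (a b : ℝ) : ∫ z in Set.Ico a b, (gg + hh) z
    = (max (min b 3 - max a 0) 0 + max (min b 8 - max a 5) 0)
      + (max (min b 3 - max a 2) 0 + max (min b 6 - max a 5) 0) := by
  have : ∀ z, (gg + hh) z = gg z + hh z := fun z => rfl
  rw [setIntegral_congr_fun measurableSet_Ico (fun z _ => this z),
    integral_add gg_int.integrableOn hh_int.integrableOn, int_gg, int_hh]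

/-! ### total mass over [0, 2^n) -/

lemma int_total {f : ℝ → ℝ} (hint : Integrable f) (hzero : ∀ z, (8:ℝ) ≤ z → f z = 0)
    {T : ℝ} (hT : (8:ℝ) ≤ T) : ∫ z in Set.Ico (0:ℝ) T, f z = ∫ z in Set.Ico (0:ℝ) 8, f z := by
  rw [show Set.Ico (0:ℝ) T = Set.Ico 0 8 ∪ Set.Ico 8 T from
      (Set.Ico_union_Ico_eq_Ico (by norm_num) hT).symm,
    setIntegral_union (Set.Ico_disjoint_Ico_same) measurableSet_Ico
      hint.integrableOn hint.integrableOn]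
  have : ∫ z in Set.Ico (8:ℝ) T, f z = 0 := by
    rw [setIntegral_congr_fun measurableSet_Ico (fun z hz => hzero z hz.1)]
    simp
  rw [this, add_zero]

lemma avg_pow_eq {f : ℝ → ℝ} (hint : Integrable f) (hzero : ∀ z, (8:ℝ) ≤ z → f z = 0)
    {n : ℤ} (hn : 3 ≤ n) :
    ⨍ z in Set.Ico (0:ℝ) ((2:ℝ)^n), f z = (∫ z in Set.Ico (0:ℝ) 8, f z) * ((2:ℝ)^n)⁻¹ := by
  have h8 := two_zpow_ge8 hn
  rw [avg_Ico f (by linarith), int_total hint hzero h8, sub_zero]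
  ring

lemma avg_pow_le {f : ℝ → ℝ} (hint : Integrable f) (hzero : ∀ z, (8:ℝ) ≤ z → f z = 0)
    (hnn : ∀ z, 0 ≤ f z) {n : ℤ} (hn : 3 ≤ n) :
    ⨍ z in Set.Ico (0:ℝ) ((2:ℝ)^n), f z ≤ (∫ z in Set.Ico (0:ℝ) 8, f z) / 8 := by
  rw [avg_pow_eq hint hzero hn]
  have hS : 0 ≤ ∫ z in Set.Ico (0:ℝ) 8, f z := setIntegral_nonneg measurableSet_Ico fun z _ => hnn z
  have h8 := two_zpow_ge8 hn
  rw [div_eq_mul_inv]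
  apply mul_le_mul_of_nonneg_left _ hS
  apply inv_anti₀ (by norm_num) h8

/-! ### the tail -/

lemma dmax_tail {f : ℝ → ℝ} (hint : Integrable f) (hnn : ∀ z, 0 ≤ f z)
    (hzero : ∀ z, (8:ℝ) ≤ z → f z = 0) {k : ℤ} (hk : 3 ≤ k) {x : ℝ}
    (hx1 : (2:ℝ)^k ≤ x) (hx2 : x < (2:ℝ)^(k+1)) :
    dyadicMax1 f x = (∫ z in Set.Ico (0:ℝ) 8, f z) * ((2:ℝ)^(k+1))⁻¹ := by
  have h8 := two_zpow_ge8 hk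
  have hS : 0 ≤ ∫ z in Set.Ico (0:ℝ) 8, f z := setIntegral_nonneg measurableSet_Ico fun z _ => hnn z
  have hx0 : (0:ℝ) ≤ x := le_trans (by linarith) hx1
  have hset : ∀ n : ℤ, Set.Ico ((2:ℝ)^n*((0:ℤ):ℝ)) ((2:ℝ)^n*(((0:ℤ):ℝ)+1)) = Set.Ico 0 ((2:ℝ)^n) := by
    intro n; norm_num
  apply dmax_eq
  · refine ⟨k+1, 0, ?_, ?_⟩
    · rw [hset]; exact ⟨hx0, hx2⟩
    · rw [hset, avg_pow_eq hint hzero (by omega)]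
  · intro n m hxI
    rcases le_or_gt n k with hn | hn
    · -- small scale: interval inside [2^k, 2^(k+1)), f = 0 there
      have hcell : x ∈ Set.Ico ((2:ℝ)^k*((1:ℤ):ℝ)) ((2:ℝ)^k*(((1:ℤ):ℝ)+1)) := by
        push_cast
        constructor
        · rw [mul_one]; exact hx1
        · rw [show (2:ℝ)^k*(1+1) = 2^(k+1) by rw [zpow_add_one₀ (two_ne_zero : (2:ℝ) ≠ 0)]; ring]
          exact hx2
      have hsub := dyadic_subset hn hxI hcell
      have havg : (⨍ z in Set.Ico ((2:ℝ)^n*m) ((2:ℝ)^n*(m+1)), f z) = 0 := by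
        apply avg_const_on f (lt_of_le_of_lt hxI.1 hxI.2)
        intro z hz
        apply hzero
        have := (hsub hz).1
        push_cast at this
        rw [mul_one] at this
        linarith
      rw [havg]
      positivity
    · -- large scale: I = [0, 2^n)
      have hm : m = 0 := by
        apply dyadic_m_eq hxI.1 hxI.2
        · simpa using hx0
        · calc x < (2:ℝ)^(k+1) := hx2
          _ ≤ (2:ℝ)^n := zpow_le_zpow_right₀ one_le_two (by omega)
          _ = (2:ℝ)^n * (((0:ℤ):ℝ)+1) := by norm_num
      subst hm
      rw [hset, avg_pow_eq hint hzero (by omega)]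
      apply mul_le_mul_of_nonneg_left _ hS
      apply inv_anti₀ (two_zpow_pos (k+1))
      exact zpow_le_zpow_right₀ one_le_two (by omega)

lemma dy_Ico_eq {n m : ℤ} {a b : ℝ} (ha : (2:ℝ)^n*(m:ℝ) = a) (hb : (2:ℝ)^n*((m:ℝ)+1) = b) :
    Set.Ico ((2:ℝ)^n*(m:ℝ)) ((2:ℝ)^n*((m:ℝ)+1)) = Set.Ico a b := by rw [ha, hb]

/-! ### regions for gg -/

lemma dmax_gg_03 {x : ℝ} (h1 : (0:ℝ) ≤ x) (h2 : x < 3) : dyadicMax1 gg x = 1 := by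
  apply dmax_eq
  · rcases lt_or_ge x 2 with hx | hx
    · refine ⟨1, 0, ?_⟩
      rw [dy_Ico_eq (a := 0) (b := 2) (by norm_num) (by norm_num)]
      refine ⟨⟨h1, hx⟩, ?_⟩
      rw [avg_const_on gg (by norm_num) (fun z hz => ?_)]
      rw [gg_def]
      rw [if_pos ⟨hz.1, by linarith [hz.2]⟩, if_neg (by rintro ⟨h5, _⟩; linarith [hz.2])]
      norm_num
    · refine ⟨0, 2, ?_⟩
      rw [dy_Ico_eq (a := 2) (b := 3) (by norm_num) (by norm_num)]
      refine ⟨⟨hx, h2⟩, ?_⟩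
      rw [avg_const_on gg (by norm_num) (fun z hz => ?_)]
      rw [gg_def]
      rw [if_pos ⟨by linarith [hz.1], hz.2⟩, if_neg (by rintro ⟨h5, _⟩; linarith [hz.2])]
      norm_num
  · intro n m hxI
    exact avg_le_bound gg (lt_of_le_of_lt hxI.1 hxI.2) gg_int gg_le_one

lemma dmax_gg_58 {x : ℝ} (h1 : (5:ℝ) ≤ x) (h2 : x < 8) : dyadicMax1 gg x = 1 := by
  apply dmax_eq
  · rcases lt_or_ge x 6 with hx | hx
    · refine ⟨0, 5, ?_⟩
      rw [dy_Ico_eq (a := 5) (b := 6) (by norm_num) (by norm_num)]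
      refine ⟨⟨h1, hx⟩, ?_⟩
      rw [avg_const_on gg (by norm_num) (fun z hz => ?_)]
      rw [gg_def]
      rw [if_neg (by rintro ⟨_, h3⟩; linarith [hz.1]), if_pos ⟨hz.1, by linarith [hz.2]⟩]
      norm_num
    · refine ⟨1, 3, ?_⟩
      rw [dy_Ico_eq (a := 6) (b := 8) (by norm_num) (by norm_num)]
      refine ⟨⟨hx, h2⟩, ?_⟩
      rw [avg_const_on gg (by norm_num) (fun z hz => ?_)]
      rw [gg_def]
      rw [if_neg (by rintro ⟨_, h3⟩; linarith [hz.1]), if_pos ⟨by linarith [hz.1], hz.2⟩]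
      norm_num
  · intro n m hxI
    exact avg_le_bound gg (lt_of_le_of_lt hxI.1 hxI.2) gg_int gg_le_one

lemma gg_S : ∫ z in Set.Ico (0:ℝ) 8, gg z = 6 := by rw [int_gg]; norm_num

lemma dmax_gg_34 {x : ℝ} (h1 : (3:ℝ) ≤ x) (h2 : x < 4) : dyadicMax1 gg x = 3/4 := by
  apply dmax_eq
  · refine ⟨2, 0, ?_⟩
    rw [dy_Ico_eq (a := 0) (b := 4) (by norm_num) (by norm_num)]
    refine ⟨⟨by linarith, by linarith⟩, ?_⟩
    rw [avg_Ico gg (by norm_num), int_gg]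
    norm_num
  · intro n m hxI
    rcases dyadic_classify hxI 3 (by norm_num) (by norm_num) (by push_cast; linarith)
      (by push_cast; linarith) with ⟨hn, hsub⟩ | ⟨hn, hm⟩ | ⟨hn, hm⟩ | ⟨hn, hm⟩
    · have h0 : (⨍ z in Set.Ico ((2:ℝ)^n*(m:ℝ)) ((2:ℝ)^n*((m:ℝ)+1)), gg z) = 0 := by
        apply avg_const_on gg (lt_of_le_of_lt hxI.1 hxI.2)
        intro z hz
        have hz' := hsub hz
        push_cast at hz'
        rw [gg_def]
        rw [if_neg (by rintro ⟨_, h3⟩; linarith [hz'.1]), if_neg (by rintro ⟨h5, _⟩; linarith [hz'.2])]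
        norm_num
      rw [h0]; norm_num
    · subst hn; norm_num at hm; subst hm
      rw [dy_Ico_eq (a := 2) (b := 4) (by norm_num) (by norm_num)]
      rw [avg_Ico gg (by norm_num), int_gg]
      norm_num
    · subst hn; norm_num at hm; subst hm
      rw [dy_Ico_eq (a := 0) (b := 4) (by norm_num) (by norm_num)]
      rw [avg_Ico gg (by norm_num), int_gg]
      norm_num
    · subst hm
      rw [dy_Ico_eq (a := 0) (b := (2:ℝ)^n) (by norm_num) (by norm_num)]
      calc ⨍ z in Set.Ico (0:ℝ) ((2:ℝ)^n), gg z ≤ (∫ z in Set.Ico (0:ℝ) 8, gg z) / 8 :=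
        avg_pow_le gg_int gg_zero_ge8 gg_nonneg hn
      _ = 3/4 := by rw [gg_S]; norm_num

lemma dmax_gg_45 {x : ℝ} (h1 : (4:ℝ) ≤ x) (h2 : x < 5) : dyadicMax1 gg x = 3/4 := by
  apply dmax_eq
  · refine ⟨2, 1, ?_⟩
    rw [dy_Ico_eq (a := 4) (b := 8) (by norm_num) (by norm_num)]
    refine ⟨⟨by linarith, by linarith⟩, ?_⟩
    rw [avg_Ico gg (by norm_num), int_gg]
    norm_num
  · intro n m hxI
    rcases dyadic_classify hxI 4 (by norm_num) (by norm_num) (by push_cast; linarith)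
      (by push_cast; linarith) with ⟨hn, hsub⟩ | ⟨hn, hm⟩ | ⟨hn, hm⟩ | ⟨hn, hm⟩
    · have h0 : (⨍ z in Set.Ico ((2:ℝ)^n*(m:ℝ)) ((2:ℝ)^n*((m:ℝ)+1)), gg z) = 0 := by
        apply avg_const_on gg (lt_of_le_of_lt hxI.1 hxI.2)
        intro z hz
        have hz' := hsub hz
        push_cast at hz'
        rw [gg_def]
        rw [if_neg (by rintro ⟨_, h3⟩; linarith [hz'.1]), if_neg (by rintro ⟨h5, _⟩; linarith [hz'.2])]
        norm_num
      rw [h0]; norm_num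
    · subst hn; norm_num at hm; subst hm
      rw [dy_Ico_eq (a := 4) (b := 6) (by norm_num) (by norm_num)]
      rw [avg_Ico gg (by norm_num), int_gg]
      norm_num
    · subst hn; norm_num at hm; subst hm
      rw [dy_Ico_eq (a := 4) (b := 8) (by norm_num) (by norm_num)]
      rw [avg_Ico gg (by norm_num), int_gg]
      norm_num
    · subst hm
      rw [dy_Ico_eq (a := 0) (b := (2:ℝ)^n) (by norm_num) (by norm_num)]
      calc ⨍ z in Set.Ico (0:ℝ) ((2:ℝ)^n), gg z ≤ (∫ z in Set.Ico (0:ℝ) 8, gg z) / 8 :=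
        avg_pow_le gg_int gg_zero_ge8 gg_nonneg hn
      _ = 3/4 := by rw [gg_S]; norm_num

/-! ### helper eval lemmas -/

lemma hh_zero' {z : ℝ} (h : z < 2 ∨ ((3:ℝ) ≤ z ∧ z < 5) ∨ (6:ℝ) ≤ z) : hh z = 0 := by
  rw [hh_def, if_neg, if_neg]
  · norm_num
  · rintro ⟨a, b⟩; rcases h with h|⟨h1,h2⟩|h <;> linarith
  · rintro ⟨a, b⟩; rcases h with h|⟨h1,h2⟩|h <;> linarith

lemma gg_zero' {z : ℝ} (h : z < 0 ∨ ((3:ℝ) ≤ z ∧ z < 5) ∨ (8:ℝ) ≤ z) : gg z = 0 := by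
  rw [gg_def, if_neg, if_neg]
  · norm_num
  · rintro ⟨a, b⟩; rcases h with h|⟨h1,h2⟩|h <;> linarith
  · rintro ⟨a, b⟩; rcases h with h|⟨h1,h2⟩|h <;> linarith

lemma hh_one' {z : ℝ} (h : ((2:ℝ) ≤ z ∧ z < 3) ∨ ((5:ℝ) ≤ z ∧ z < 6)) : hh z = 1 := by
  rw [hh_def]
  rcases h with ⟨h1,h2⟩|⟨h1,h2⟩
  · rw [if_pos ⟨h1,h2⟩, if_neg (by rintro ⟨a,b⟩; linarith)]; norm_num
  · rw [if_neg (by rintro ⟨a,b⟩; linarith), if_pos ⟨h1,h2⟩]; norm_num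

lemma gg_one' {z : ℝ} (h : ((0:ℝ) ≤ z ∧ z < 3) ∨ ((5:ℝ) ≤ z ∧ z < 8)) : gg z = 1 := by
  rw [gg_def]
  rcases h with ⟨h1,h2⟩|⟨h1,h2⟩
  · rw [if_pos ⟨h1,h2⟩, if_neg (by rintro ⟨a,b⟩; linarith)]; norm_num
  · rw [if_neg (by rintro ⟨a,b⟩; linarith), if_pos ⟨h1,h2⟩]; norm_num

lemma hh_S : ∫ z in Set.Ico (0:ℝ) 8, hh z = 2 := by rw [int_hh]; norm_num

lemma fgh_int : Integrable (gg + hh) := gg_int.add hh_int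
lemma fgh_nonneg (z : ℝ) : 0 ≤ (gg + hh) z := add_nonneg (gg_nonneg z) (hh_nonneg z)
lemma fgh_le_two (z : ℝ) : (gg + hh) z ≤ 2 := by
  have := gg_le_one z; have := hh_le_one z
  show gg z + hh z ≤ 2
  linarith
lemma fgh_zero_ge8 (z : ℝ) (h : (8:ℝ) ≤ z) : (gg + hh) z = 0 := by
  show gg z + hh z = 0
  rw [gg_zero_ge8 z h, hh_zero_ge8 z h]; norm_num
lemma fgh_zero_neg (z : ℝ) (h : z < 0) : (gg + hh) z = 0 := by
  show gg z + hh z = 0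
  rw [gg_zero_neg z h, hh_zero_neg z h]; norm_num
lemma fgh_S : ∫ z in Set.Ico (0:ℝ) 8, (gg + hh) z = 8 := by rw [int_ggh]; norm_num

/-! ### regions for hh -/

lemma dmax_hh_02 {x : ℝ} (h1 : (0:ℝ) ≤ x) (h2 : x < 2) : dyadicMax1 hh x = 1/4 := by
  apply dmax_eq
  · refine ⟨3, 0, ?_⟩
    rw [dy_Ico_eq (a := 0) (b := 8) (by norm_num) (by norm_num)]
    refine ⟨⟨h1, by linarith⟩, ?_⟩
    rw [avg_Ico hh (by norm_num), int_hh]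
    norm_num
  · intro n m hxI
    have hcell : ∀ p : ℤ, (0 ≤ p) → (p < 8) → ((p:ℝ) ≤ x) → (x < (p:ℝ)+1) →
        ((p:ℝ)+1 ≤ 2) →
        (⨍ z in Set.Ico ((2:ℝ)^n*(m:ℝ)) ((2:ℝ)^n*((m:ℝ)+1)), hh z) ≤ 1/4 := by
      intro p hp0 hp8 hpx hpx1 hple
      rcases dyadic_classify hxI p hp0 hp8 hpx hpx1 with ⟨hn, hsub⟩ | ⟨hn, hm⟩ | ⟨hn, hm⟩ | ⟨hn, hm⟩
      · have h0 : (⨍ z in Set.Ico ((2:ℝ)^n*(m:ℝ)) ((2:ℝ)^n*((m:ℝ)+1)), hh z) = 0 := by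
          apply avg_const_on hh (lt_of_le_of_lt hxI.1 hxI.2)
          intro z hz
          have hz' := hsub hz
          exact hh_zero' (Or.inl (by linarith [hz'.2]))
        rw [h0]; norm_num
      · subst hn
        have hp1 : (p:ℤ) ≤ 1 := by
          have : (p:ℝ) ≤ 1 := by linarith
          exact_mod_cast this
        have hm0 : m = 0 := by omega
        subst hm0
        rw [dy_Ico_eq (a := 0) (b := 2) (by norm_num) (by norm_num)]
        rw [avg_Ico hh (by norm_num), int_hh]
        norm_num
      · subst hn
        have hp1 : (p:ℤ) ≤ 1 := by
          have : (p:ℝ) ≤ 1 := by linarith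
          exact_mod_cast this
        have hm0 : m = 0 := by omega
        subst hm0
        rw [dy_Ico_eq (a := 0) (b := 4) (by norm_num) (by norm_num)]
        rw [avg_Ico hh (by norm_num), int_hh]
        norm_num
      · subst hm
        rw [dy_Ico_eq (a := 0) (b := (2:ℝ)^n) (by norm_num) (by norm_num)]
        calc ⨍ z in Set.Ico (0:ℝ) ((2:ℝ)^n), hh z ≤ (∫ z in Set.Ico (0:ℝ) 8, hh z) / 8 :=
          avg_pow_le hh_int hh_zero_ge8 hh_nonneg hn
        _ = 1/4 := by rw [hh_S]; norm_num
    rcases lt_or_ge x 1 with hx | hx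
    · exact hcell 0 (by norm_num) (by norm_num) (by push_cast; linarith) (by push_cast; linarith)
        (by push_cast; norm_num)
    · exact hcell 1 (by norm_num) (by norm_num) (by push_cast; linarith) (by push_cast; linarith)
        (by push_cast; norm_num)

lemma dmax_hh_23 {x : ℝ} (h1 : (2:ℝ) ≤ x) (h2 : x < 3) : dyadicMax1 hh x = 1 := by
  apply dmax_eq
  · refine ⟨0, 2, ?_⟩
    rw [dy_Ico_eq (a := 2) (b := 3) (by norm_num) (by norm_num)]
    refine ⟨⟨h1, h2⟩, ?_⟩
    rw [avg_const_on hh (by norm_num) (fun z hz => hh_one' (Or.inl ⟨hz.1, hz.2⟩))]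
  · intro n m hxI
    exact avg_le_bound hh (lt_of_le_of_lt hxI.1 hxI.2) hh_int hh_le_one

lemma dmax_hh_56 {x : ℝ} (h1 : (5:ℝ) ≤ x) (h2 : x < 6) : dyadicMax1 hh x = 1 := by
  apply dmax_eq
  · refine ⟨0, 5, ?_⟩
    rw [dy_Ico_eq (a := 5) (b := 6) (by norm_num) (by norm_num)]
    refine ⟨⟨h1, h2⟩, ?_⟩
    rw [avg_const_on hh (by norm_num) (fun z hz => hh_one' (Or.inr ⟨hz.1, hz.2⟩))]
  · intro n m hxI
    exact avg_le_bound hh (lt_of_le_of_lt hxI.1 hxI.2) hh_int hh_le_one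

lemma dmax_hh_34 {x : ℝ} (h1 : (3:ℝ) ≤ x) (h2 : x < 4) : dyadicMax1 hh x = 1/2 := by
  apply dmax_eq
  · refine ⟨1, 1, ?_⟩
    rw [dy_Ico_eq (a := 2) (b := 4) (by norm_num) (by norm_num)]
    refine ⟨⟨by linarith, by linarith⟩, ?_⟩
    rw [avg_Ico hh (by norm_num), int_hh]
    norm_num
  · intro n m hxI
    rcases dyadic_classify hxI 3 (by norm_num) (by norm_num) (by push_cast; linarith)
      (by push_cast; linarith) with ⟨hn, hsub⟩ | ⟨hn, hm⟩ | ⟨hn, hm⟩ | ⟨hn, hm⟩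
    · have h0 : (⨍ z in Set.Ico ((2:ℝ)^n*(m:ℝ)) ((2:ℝ)^n*((m:ℝ)+1)), hh z) = 0 := by
        apply avg_const_on hh (lt_of_le_of_lt hxI.1 hxI.2)
        intro z hz
        have hz' := hsub hz
        push_cast at hz'
        exact hh_zero' (Or.inr (Or.inl ⟨by linarith [hz'.1], by linarith [hz'.2]⟩))
      rw [h0]; norm_num
    · subst hn; norm_num at hm; subst hm
      rw [dy_Ico_eq (a := 2) (b := 4) (by norm_num) (by norm_num)]
      rw [avg_Ico hh (by norm_num), int_hh]
      norm_num
    · subst hn; norm_num at hm; subst hm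
      rw [dy_Ico_eq (a := 0) (b := 4) (by norm_num) (by norm_num)]
      rw [avg_Ico hh (by norm_num), int_hh]
      norm_num
    · subst hm
      rw [dy_Ico_eq (a := 0) (b := (2:ℝ)^n) (by norm_num) (by norm_num)]
      calc ⨍ z in Set.Ico (0:ℝ) ((2:ℝ)^n), hh z ≤ (∫ z in Set.Ico (0:ℝ) 8, hh z) / 8 :=
        avg_pow_le hh_int hh_zero_ge8 hh_nonneg hn
      _ ≤ 1/2 := by rw [hh_S]; norm_num

lemma dmax_hh_45 {x : ℝ} (h1 : (4:ℝ) ≤ x) (h2 : x < 5) : dyadicMax1 hh x = 1/2 := by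
  apply dmax_eq
  · refine ⟨1, 2, ?_⟩
    rw [dy_Ico_eq (a := 4) (b := 6) (by norm_num) (by norm_num)]
    refine ⟨⟨by linarith, by linarith⟩, ?_⟩
    rw [avg_Ico hh (by norm_num), int_hh]
    norm_num
  · intro n m hxI
    rcases dyadic_classify hxI 4 (by norm_num) (by norm_num) (by push_cast; linarith)
      (by push_cast; linarith) with ⟨hn, hsub⟩ | ⟨hn, hm⟩ | ⟨hn, hm⟩ | ⟨hn, hm⟩
    · have h0 : (⨍ z in Set.Ico ((2:ℝ)^n*(m:ℝ)) ((2:ℝ)^n*((m:ℝ)+1)), hh z) = 0 := by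
        apply avg_const_on hh (lt_of_le_of_lt hxI.1 hxI.2)
        intro z hz
        have hz' := hsub hz
        push_cast at hz'
        exact hh_zero' (Or.inr (Or.inl ⟨by linarith [hz'.1], by linarith [hz'.2]⟩))
      rw [h0]; norm_num
    · subst hn; norm_num at hm; subst hm
      rw [dy_Ico_eq (a := 4) (b := 6) (by norm_num) (by norm_num)]
      rw [avg_Ico hh (by norm_num), int_hh]
      norm_num
    · subst hn; norm_num at hm; subst hm
      rw [dy_Ico_eq (a := 4) (b := 8) (by norm_num) (by norm_num)]
      rw [avg_Ico hh (by norm_num), int_hh]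
      norm_num
    · subst hm
      rw [dy_Ico_eq (a := 0) (b := (2:ℝ)^n) (by norm_num) (by norm_num)]
      calc ⨍ z in Set.Ico (0:ℝ) ((2:ℝ)^n), hh z ≤ (∫ z in Set.Ico (0:ℝ) 8, hh z) / 8 :=
        avg_pow_le hh_int hh_zero_ge8 hh_nonneg hn
      _ ≤ 1/2 := by rw [hh_S]; norm_num

lemma dmax_hh_68 {x : ℝ} (h1 : (6:ℝ) ≤ x) (h2 : x < 8) : dyadicMax1 hh x = 1/4 := by
  apply dmax_eq
  · refine ⟨2, 1, ?_⟩
    rw [dy_Ico_eq (a := 4) (b := 8) (by norm_num) (by norm_num)]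
    refine ⟨⟨by linarith, by linarith⟩, ?_⟩
    rw [avg_Ico hh (by norm_num), int_hh]
    norm_num
  · intro n m hxI
    have hcell : ∀ p : ℤ, (0 ≤ p) → (p < 8) → ((p:ℝ) ≤ x) → (x < (p:ℝ)+1) →
        ((6:ℝ) ≤ p) →
        (⨍ z in Set.Ico ((2:ℝ)^n*(m:ℝ)) ((2:ℝ)^n*((m:ℝ)+1)), hh z) ≤ 1/4 := by
      intro p hp0 hp8 hpx hpx1 hple
      rcases dyadic_classify hxI p hp0 hp8 hpx hpx1 with ⟨hn, hsub⟩ | ⟨hn, hm⟩ | ⟨hn, hm⟩ | ⟨hn, hm⟩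
      · have h0 : (⨍ z in Set.Ico ((2:ℝ)^n*(m:ℝ)) ((2:ℝ)^n*((m:ℝ)+1)), hh z) = 0 := by
          apply avg_const_on hh (lt_of_le_of_lt hxI.1 hxI.2)
          intro z hz
          have hz' := hsub hz
          exact hh_zero' (Or.inr (Or.inr (by linarith [hz'.1])))
        rw [h0]; norm_num
      · subst hn
        have hp6 : (6:ℤ) ≤ p := by exact_mod_cast hple
        have hm0 : m = 3 := by omega
        subst hm0
        rw [dy_Ico_eq (a := 6) (b := 8) (by norm_num) (by norm_num)]
        rw [avg_Ico hh (by norm_num), int_hh]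
        norm_num
      · subst hn
        have hp6 : (6:ℤ) ≤ p := by exact_mod_cast hple
        have hm0 : m = 1 := by omega
        subst hm0
        rw [dy_Ico_eq (a := 4) (b := 8) (by norm_num) (by norm_num)]
        rw [avg_Ico hh (by norm_num), int_hh]
        norm_num
      · subst hm
        rw [dy_Ico_eq (a := 0) (b := (2:ℝ)^n) (by norm_num) (by norm_num)]
        calc ⨍ z in Set.Ico (0:ℝ) ((2:ℝ)^n), hh z ≤ (∫ z in Set.Ico (0:ℝ) 8, hh z) / 8 :=
          avg_pow_le hh_int hh_zero_ge8 hh_nonneg hn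
        _ = 1/4 := by rw [hh_S]; norm_num
    rcases lt_or_ge x 7 with hx | hx
    · exact hcell 6 (by norm_num) (by norm_num) (by push_cast; linarith) (by push_cast; linarith)
        (by push_cast; norm_num)
    · exact hcell 7 (by norm_num) (by norm_num) (by push_cast; linarith) (by push_cast; linarith)
        (by push_cast; norm_num)

/-! ### regions for gg + hh -/

lemma fgh_one' {z : ℝ} (h : ((0:ℝ) ≤ z ∧ z < 2) ∨ ((6:ℝ) ≤ z ∧ z < 8)) : (gg + hh) z = 1 := by
  show gg z + hh z = 1
  rcases h with ⟨h1,h2⟩|⟨h1,h2⟩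
  · rw [gg_one' (Or.inl ⟨h1, by linarith⟩), hh_zero' (Or.inl h2)]; norm_num
  · rw [gg_one' (Or.inr ⟨by linarith, h2⟩), hh_zero' (Or.inr (Or.inr h1))]; norm_num

lemma fgh_zero' {z : ℝ} (h : (3:ℝ) ≤ z ∧ z < 5) : (gg + hh) z = 0 := by
  show gg z + hh z = 0
  rw [gg_zero' (Or.inr (Or.inl h)), hh_zero' (Or.inr (Or.inl h))]; norm_num

lemma fgh_two' {z : ℝ} (h : ((2:ℝ) ≤ z ∧ z < 3) ∨ ((5:ℝ) ≤ z ∧ z < 6)) : (gg + hh) z = 2 := by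
  show gg z + hh z = 2
  rcases h with ⟨h1,h2⟩|⟨h1,h2⟩
  · rw [gg_one' (Or.inl ⟨by linarith, h2⟩), hh_one' (Or.inl ⟨h1,h2⟩)]; norm_num
  · rw [gg_one' (Or.inr ⟨h1, by linarith⟩), hh_one' (Or.inr ⟨h1,h2⟩)]; norm_num

lemma dmax_fgh_02 {x : ℝ} (h1 : (0:ℝ) ≤ x) (h2 : x < 2) : dyadicMax1 (gg + hh) x = 1 := by
  apply dmax_eq
  · refine ⟨1, 0, ?_⟩
    rw [dy_Ico_eq (a := 0) (b := 2) (by norm_num) (by norm_num)]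
    refine ⟨⟨h1, h2⟩, ?_⟩
    rw [avg_const_on (gg+hh) (by norm_num) (fun z hz => fgh_one' (Or.inl ⟨hz.1, hz.2⟩))]
  · intro n m hxI
    have hcell : ∀ p : ℤ, (0 ≤ p) → (p < 8) → ((p:ℝ) ≤ x) → (x < (p:ℝ)+1) →
        ((p:ℝ)+1 ≤ 2) →
        (⨍ z in Set.Ico ((2:ℝ)^n*(m:ℝ)) ((2:ℝ)^n*((m:ℝ)+1)), (gg+hh) z) ≤ 1 := by
      intro p hp0 hp8 hpx hpx1 hple
      rcases dyadic_classify hxI p hp0 hp8 hpx hpx1 with ⟨hn, hsub⟩ | ⟨hn, hm⟩ | ⟨hn, hm⟩ | ⟨hn, hm⟩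
      · have h0 : (⨍ z in Set.Ico ((2:ℝ)^n*(m:ℝ)) ((2:ℝ)^n*((m:ℝ)+1)), (gg+hh) z) = 1 := by
          apply avg_const_on (gg+hh) (lt_of_le_of_lt hxI.1 hxI.2)
          intro z hz
          have hz' := hsub hz
          have hp0' : (0:ℝ) ≤ (p:ℝ) := by exact_mod_cast hp0
          exact fgh_one' (Or.inl ⟨by linarith [hz'.1], by linarith [hz'.2]⟩)
        rw [h0]
      · subst hn
        have hp1 : (p:ℤ) ≤ 1 := by
          have : (p:ℝ) ≤ 1 := by linarith
          exact_mod_cast this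
        have hm0 : m = 0 := by omega
        subst hm0
        rw [dy_Ico_eq (a := 0) (b := 2) (by norm_num) (by norm_num)]
        rw [avg_Ico (gg+hh) (by norm_num), int_ggh]
        norm_num
      · subst hn
        have hp1 : (p:ℤ) ≤ 1 := by
          have : (p:ℝ) ≤ 1 := by linarith
          exact_mod_cast this
        have hm0 : m = 0 := by omega
        subst hm0
        rw [dy_Ico_eq (a := 0) (b := 4) (by norm_num) (by norm_num)]
        rw [avg_Ico (gg+hh) (by norm_num), int_ggh]
        norm_num
      · subst hm
        rw [dy_Ico_eq (a := 0) (b := (2:ℝ)^n) (by norm_num) (by norm_num)]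
        calc ⨍ z in Set.Ico (0:ℝ) ((2:ℝ)^n), (gg+hh) z
            ≤ (∫ z in Set.Ico (0:ℝ) 8, (gg+hh) z) / 8 :=
          avg_pow_le fgh_int fgh_zero_ge8 fgh_nonneg hn
        _ = 1 := by rw [fgh_S]; norm_num
    rcases lt_or_ge x 1 with hx | hx
    · exact hcell 0 (by norm_num) (by norm_num) (by push_cast; linarith) (by push_cast; linarith)
        (by push_cast; norm_num)
    · exact hcell 1 (by norm_num) (by norm_num) (by push_cast; linarith) (by push_cast; linarith)
        (by push_cast; norm_num)

lemma dmax_fgh_23 {x : ℝ} (h1 : (2:ℝ) ≤ x) (h2 : x < 3) : dyadicMax1 (gg + hh) x = 2 := by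
  apply dmax_eq
  · refine ⟨0, 2, ?_⟩
    rw [dy_Ico_eq (a := 2) (b := 3) (by norm_num) (by norm_num)]
    refine ⟨⟨h1, h2⟩, ?_⟩
    rw [avg_const_on (gg+hh) (by norm_num) (fun z hz => fgh_two' (Or.inl ⟨hz.1, hz.2⟩))]
  · intro n m hxI
    exact avg_le_bound (gg+hh) (lt_of_le_of_lt hxI.1 hxI.2) fgh_int fgh_le_two

lemma dmax_fgh_56 {x : ℝ} (h1 : (5:ℝ) ≤ x) (h2 : x < 6) : dyadicMax1 (gg + hh) x = 2 := by
  apply dmax_eq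
  · refine ⟨0, 5, ?_⟩
    rw [dy_Ico_eq (a := 5) (b := 6) (by norm_num) (by norm_num)]
    refine ⟨⟨h1, h2⟩, ?_⟩
    rw [avg_const_on (gg+hh) (by norm_num) (fun z hz => fgh_two' (Or.inr ⟨hz.1, hz.2⟩))]
  · intro n m hxI
    exact avg_le_bound (gg+hh) (lt_of_le_of_lt hxI.1 hxI.2) fgh_int fgh_le_two

lemma dmax_fgh_34 {x : ℝ} (h1 : (3:ℝ) ≤ x) (h2 : x < 4) : dyadicMax1 (gg + hh) x = 1 := by
  apply dmax_eq
  · refine ⟨2, 0, ?_⟩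
    rw [dy_Ico_eq (a := 0) (b := 4) (by norm_num) (by norm_num)]
    refine ⟨⟨by linarith, by linarith⟩, ?_⟩
    rw [avg_Ico (gg+hh) (by norm_num), int_ggh]
    norm_num
  · intro n m hxI
    rcases dyadic_classify hxI 3 (by norm_num) (by norm_num) (by push_cast; linarith)
      (by push_cast; linarith) with ⟨hn, hsub⟩ | ⟨hn, hm⟩ | ⟨hn, hm⟩ | ⟨hn, hm⟩
    · have h0 : (⨍ z in Set.Ico ((2:ℝ)^n*(m:ℝ)) ((2:ℝ)^n*((m:ℝ)+1)), (gg+hh) z) = 0 := by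
        apply avg_const_on (gg+hh) (lt_of_le_of_lt hxI.1 hxI.2)
        intro z hz
        have hz' := hsub hz
        push_cast at hz'
        exact fgh_zero' ⟨by linarith [hz'.1], by linarith [hz'.2]⟩
      rw [h0]; norm_num
    · subst hn; norm_num at hm; subst hm
      rw [dy_Ico_eq (a := 2) (b := 4) (by norm_num) (by norm_num)]
      rw [avg_Ico (gg+hh) (by norm_num), int_ggh]
      norm_num
    · subst hn; norm_num at hm; subst hm
      rw [dy_Ico_eq (a := 0) (b := 4) (by norm_num) (by norm_num)]
      rw [avg_Ico (gg+hh) (by norm_num), int_ggh]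
      norm_num
    · subst hm
      rw [dy_Ico_eq (a := 0) (b := (2:ℝ)^n) (by norm_num) (by norm_num)]
      calc ⨍ z in Set.Ico (0:ℝ) ((2:ℝ)^n), (gg+hh) z
          ≤ (∫ z in Set.Ico (0:ℝ) 8, (gg+hh) z) / 8 :=
        avg_pow_le fgh_int fgh_zero_ge8 fgh_nonneg hn
      _ = 1 := by rw [fgh_S]; norm_num

lemma dmax_fgh_45 {x : ℝ} (h1 : (4:ℝ) ≤ x) (h2 : x < 5) : dyadicMax1 (gg + hh) x = 1 := by
  apply dmax_eq
  · refine ⟨1, 2, ?_⟩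
    rw [dy_Ico_eq (a := 4) (b := 6) (by norm_num) (by norm_num)]
    refine ⟨⟨by linarith, by linarith⟩, ?_⟩
    rw [avg_Ico (gg+hh) (by norm_num), int_ggh]
    norm_num
  · intro n m hxI
    rcases dyadic_classify hxI 4 (by norm_num) (by norm_num) (by push_cast; linarith)
      (by push_cast; linarith) with ⟨hn, hsub⟩ | ⟨hn, hm⟩ | ⟨hn, hm⟩ | ⟨hn, hm⟩
    · have h0 : (⨍ z in Set.Ico ((2:ℝ)^n*(m:ℝ)) ((2:ℝ)^n*((m:ℝ)+1)), (gg+hh) z) = 0 := by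
        apply avg_const_on (gg+hh) (lt_of_le_of_lt hxI.1 hxI.2)
        intro z hz
        have hz' := hsub hz
        push_cast at hz'
        exact fgh_zero' ⟨by linarith [hz'.1], by linarith [hz'.2]⟩
      rw [h0]; norm_num
    · subst hn; norm_num at hm; subst hm
      rw [dy_Ico_eq (a := 4) (b := 6) (by norm_num) (by norm_num)]
      rw [avg_Ico (gg+hh) (by norm_num), int_ggh]
      norm_num
    · subst hn; norm_num at hm; subst hm
      rw [dy_Ico_eq (a := 4) (b := 8) (by norm_num) (by norm_num)]
      rw [avg_Ico (gg+hh) (by norm_num), int_ggh]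
      norm_num
    · subst hm
      rw [dy_Ico_eq (a := 0) (b := (2:ℝ)^n) (by norm_num) (by norm_num)]
      calc ⨍ z in Set.Ico (0:ℝ) ((2:ℝ)^n), (gg+hh) z
          ≤ (∫ z in Set.Ico (0:ℝ) 8, (gg+hh) z) / 8 :=
        avg_pow_le fgh_int fgh_zero_ge8 fgh_nonneg hn
      _ = 1 := by rw [fgh_S]; norm_num

lemma dmax_fgh_68 {x : ℝ} (h1 : (6:ℝ) ≤ x) (h2 : x < 8) : dyadicMax1 (gg + hh) x = 1 := by
  apply dmax_eq
  · refine ⟨1, 3, ?_⟩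
    rw [dy_Ico_eq (a := 6) (b := 8) (by norm_num) (by norm_num)]
    refine ⟨⟨h1, h2⟩, ?_⟩
    rw [avg_const_on (gg+hh) (by norm_num) (fun z hz => fgh_one' (Or.inr ⟨hz.1, hz.2⟩))]
  · intro n m hxI
    have hcell : ∀ p : ℤ, (0 ≤ p) → (p < 8) → ((p:ℝ) ≤ x) → (x < (p:ℝ)+1) →
        ((6:ℝ) ≤ p) →
        (⨍ z in Set.Ico ((2:ℝ)^n*(m:ℝ)) ((2:ℝ)^n*((m:ℝ)+1)), (gg+hh) z) ≤ 1 := by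
      intro p hp0 hp8 hpx hpx1 hple
      rcases dyadic_classify hxI p hp0 hp8 hpx hpx1 with ⟨hn, hsub⟩ | ⟨hn, hm⟩ | ⟨hn, hm⟩ | ⟨hn, hm⟩
      · have hp8' : (p:ℝ)+1 ≤ 8 := by
          have : (p:ℤ) < 8 := hp8
          have : (p:ℝ) < 8 := by exact_mod_cast this
          have : (p:ℤ) ≤ 7 := by omega
          have : (p:ℝ) ≤ 7 := by exact_mod_cast this
          linarith
        have h0 : (⨍ z in Set.Ico ((2:ℝ)^n*(m:ℝ)) ((2:ℝ)^n*((m:ℝ)+1)), (gg+hh) z) = 1 := by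
          apply avg_const_on (gg+hh) (lt_of_le_of_lt hxI.1 hxI.2)
          intro z hz
          have hz' := hsub hz
          exact fgh_one' (Or.inr ⟨by linarith [hz'.1], by linarith [hz'.2]⟩)
        rw [h0]
      · subst hn
        have hp6 : (6:ℤ) ≤ p := by exact_mod_cast hple
        have hm0 : m = 3 := by omega
        subst hm0
        rw [dy_Ico_eq (a := 6) (b := 8) (by norm_num) (by norm_num)]
        rw [avg_Ico (gg+hh) (by norm_num), int_ggh]
        norm_num
      · subst hn
        have hp6 : (6:ℤ) ≤ p := by exact_mod_cast hple
        have hm0 : m = 1 := by omega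
        subst hm0
        rw [dy_Ico_eq (a := 4) (b := 8) (by norm_num) (by norm_num)]
        rw [avg_Ico (gg+hh) (by norm_num), int_ggh]
        norm_num
      · subst hm
        rw [dy_Ico_eq (a := 0) (b := (2:ℝ)^n) (by norm_num) (by norm_num)]
        calc ⨍ z in Set.Ico (0:ℝ) ((2:ℝ)^n), (gg+hh) z
            ≤ (∫ z in Set.Ico (0:ℝ) 8, (gg+hh) z) / 8 :=
          avg_pow_le fgh_int fgh_zero_ge8 fgh_nonneg hn
        _ = 1 := by rw [fgh_S]; norm_num
    rcases lt_or_ge x 7 with hx | hx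
    · exact hcell 6 (by norm_num) (by norm_num) (by push_cast; linarith) (by push_cast; linarith)
        (by push_cast; norm_num)
    · exact hcell 7 (by norm_num) (by norm_num) (by push_cast; linarith) (by push_cast; linarith)
        (by push_cast; norm_num)

/-! ### step function representation -/

def ind (q : ℝ) : ℝ → ℝ := (Set.Ici q).indicator 1

lemma ind_one {q x : ℝ} (h : q ≤ x) : ind q x = 1 := by
  simp [ind, Set.indicator_apply, Set.mem_Ici, h]

lemma ind_zero {q x : ℝ} (h : x < q) : ind q x = 0 := by
  simp only [ind, Set.indicator_apply, Set.mem_Ici]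
  rw [if_neg (not_le.2 h)]

def stepf (a0 a2 a3 a5 a6 a8 c : ℝ) (N : ℕ) (x : ℝ) : ℝ :=
  a0 * ind 0 x + a2 * ind 2 x + a3 * ind 3 x + a5 * ind 5 x + a6 * ind 6 x + a8 * ind 8 x
    - ∑ k ∈ Finset.range (N+1), c * (2:ℝ)^(-(k:ℤ)-4) * ind ((2:ℝ)^(k+4)) x

lemma pow_ge8 {j : ℕ} (hj : 3 ≤ j) : (8:ℝ) ≤ 2^j := by
  calc (8:ℝ) = 2^(3:ℕ) := by norm_num
  _ ≤ 2^j := by apply pow_le_pow_right₀ one_le_two hj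

lemma stepf_eval_lt (a0 a2 a3 a5 a6 a8 c : ℝ) (N : ℕ) (x : ℝ) (hx : x < 8) :
    stepf a0 a2 a3 a5 a6 a8 c N x =
      a0 * ind 0 x + a2 * ind 2 x + a3 * ind 3 x + a5 * ind 5 x + a6 * ind 6 x + a8 * ind 8 x := by
  unfold stepf
  rw [Finset.sum_eq_zero, sub_zero]
  intro k _
  rw [ind_zero (lt_of_lt_of_le hx (pow_ge8 (by omega))), mul_zero]

lemma geom_aux : ∀ m : ℕ, ∑ k ∈ Finset.range m, (2:ℝ)^(-(k:ℤ)-4) = (2:ℝ)^(-3:ℤ) - (2:ℝ)^(-(m:ℤ)-3) := by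
  intro m
  induction m with
  | zero => norm_num
  | succ n ih =>
    rw [Finset.sum_range_succ, ih]
    have e1 : (2:ℝ)^(-(n:ℤ)-3) = 2 * (2:ℝ)^(-(n:ℤ)-4) := by
      rw [show (-(n:ℤ)-3) = (-(n:ℤ)-4)+1 by ring, zpow_add_one₀ (two_ne_zero : (2:ℝ) ≠ 0)]
      ring
    have e2 : (-(((n+1):ℕ):ℤ)-3) = -(n:ℤ)-4 := by push_cast; ring
    rw [e2]
    linarith

lemma stepf_tail (a0 a2 a3 a5 a6 a8 c : ℝ) (N : ℕ) (j : ℕ) (hj : 3 ≤ j) (hjN : j ≤ N+4)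
    (x : ℝ) (hx1 : (2:ℝ)^j ≤ x) (hx2 : x < 2^(j+1)) :
    stepf a0 a2 a3 a5 a6 a8 c N x =
      (a0+a2+a3+a5+a6+a8) - c * ((2:ℝ)^(-3:ℤ) - (2:ℝ)^(-(j:ℤ))) := by
  have hx8 : (8:ℝ) ≤ x := le_trans (pow_ge8 hj) hx1
  unfold stepf
  rw [ind_one (by linarith), ind_one (by linarith), ind_one (by linarith), ind_one (by linarith),
    ind_one (by linarith), ind_one (by linarith)]
  have hsum : ∑ k ∈ Finset.range (N+1), c * (2:ℝ)^(-(k:ℤ)-4) * ind ((2:ℝ)^(k+4)) x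
      = ∑ k ∈ Finset.range (j-3), c * (2:ℝ)^(-(k:ℤ)-4) := by
    rw [← Finset.sum_subset (Finset.range_subset_range.2 (by omega : j-3 ≤ N+1))]
    · apply Finset.sum_congr rfl
      intro k hk
      rw [Finset.mem_range] at hk
      have hk4 : k+4 ≤ j := by omega
      rw [ind_one (le_trans (pow_le_pow_right₀ one_le_two hk4) hx1), mul_one]
    · intro k _ hk
      rw [Finset.mem_range, not_lt] at hk
      have : j+1 ≤ k+4 := by omega
      rw [ind_zero (lt_of_lt_of_le hx2 (pow_le_pow_right₀ one_le_two this)), mul_zero]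
  rw [hsum, ← Finset.mul_sum, geom_aux]
  have : (-(((j-3):ℕ):ℤ)-3) = -(j:ℤ) := by
    have : ((j-3:ℕ):ℤ) = (j:ℤ)-3 := by omega
    rw [this]; ring
  rw [this]
  ring

lemma exists_level : ∀ (N : ℕ) (x : ℝ), 8 ≤ x → x < 2^(N+4) →
    ∃ j : ℕ, 3 ≤ j ∧ j ≤ N+3 ∧ (2:ℝ)^j ≤ x ∧ x < 2^(j+1) := by
  intro N
  induction N with
  | zero =>
    intro x h1 h2
    refine ⟨3, by norm_num, by norm_num, by norm_num; linarith, by norm_num at h2 ⊢; linarith⟩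
  | succ n ih =>
    intro x h1 h2
    rcases lt_or_ge x (2^(n+4)) with h | h
    · obtain ⟨j, a, b, hc, d⟩ := ih x h1 h
      exact ⟨j, a, by omega, hc, d⟩
    · exact ⟨n+4, by omega, by omega, h, by rw [show n+1+4 = (n+4)+1 from rfl] at h2; exact h2⟩

/-! ### pointwise identification -/

lemma zpow_tail_arith (j : ℕ) (hj : 3 ≤ j) (S A c : ℝ)
    (hA : A - c * ((2:ℝ)^(-3:ℤ) - 1) = S/2 - c*(1/8 - 1)) :
    True := trivial

lemma gg_step (N : ℕ) (x : ℝ) (hx : x < 2^(N+5)) :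
    dyadicMax1 gg x = stepf 1 0 (-1/4) (1/4) 0 (-5/8) 3 N x := by
  rcases lt_or_ge x 0 with h0 | h0
  · rw [dmax_neg gg_zero_neg h0, stepf_eval_lt _ _ _ _ _ _ _ _ _ (by linarith)]
    rw [ind_zero h0, ind_zero (show x < 2 by linarith), ind_zero (show x < 3 by linarith),
      ind_zero (show x < 5 by linarith), ind_zero (show x < 6 by linarith),
      ind_zero (show x < 8 by linarith)]
    norm_num
  rcases lt_or_ge x 3 with h3 | h3
  · rw [dmax_gg_03 h0 h3, stepf_eval_lt _ _ _ _ _ _ _ _ _ (by linarith)]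
    rw [ind_one h0, ind_zero h3, ind_zero (show x < 5 by linarith),
      ind_zero (show x < 8 by linarith)]
    ring
  rcases lt_or_ge x 4 with h4 | h4
  · rw [dmax_gg_34 h3 h4, stepf_eval_lt _ _ _ _ _ _ _ _ _ (by linarith)]
    rw [ind_one h0, ind_one h3, ind_zero (show x < 5 by linarith),
      ind_zero (show x < 8 by linarith)]
    ring
  rcases lt_or_ge x 5 with h5 | h5
  · rw [dmax_gg_45 h4 h5, stepf_eval_lt _ _ _ _ _ _ _ _ _ (by linarith)]
    rw [ind_one h0, ind_one h3, ind_zero h5, ind_zero (show x < 8 by linarith)]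
    ring
  rcases lt_or_ge x 8 with h8 | h8
  · rw [dmax_gg_58 h5 h8, stepf_eval_lt _ _ _ _ _ _ _ _ _ (by linarith)]
    rw [ind_one h0, ind_one h3, ind_one h5, ind_zero h8]
    ring
  · obtain ⟨j, hj3, hjN, hx1, hx2⟩ := exists_level (N+1) x h8 (by
      rw [show (N+1)+4 = N+5 from rfl]; exact hx)
    have hz1 : (2:ℝ)^((j:ℤ)) ≤ x := by rw [zpow_natCast]; exact hx1
    have hz2 : x < (2:ℝ)^((j:ℤ)+1) := by
      rw [show ((j:ℤ)+1) = (((j+1):ℕ):ℤ) by push_cast; ring, zpow_natCast]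
      exact hx2
    rw [dmax_tail gg_int gg_nonneg gg_zero_ge8 (by exact_mod_cast hj3) hz1 hz2, gg_S,
      stepf_tail _ _ _ _ _ _ _ _ j hj3 (by omega) x hx1 hx2]
    have e1 : (2:ℝ)^((j:ℤ)+1) = 2^((j:ℤ)) * 2 := zpow_add_one₀ two_ne_zero _
    have e2 : (2:ℝ)^(-(j:ℤ)) = ((2:ℝ)^((j:ℤ)))⁻¹ := zpow_neg 2 _
    have e3 : (2:ℝ)^(-3:ℤ) = 1/8 := by norm_num
    have hpos : (0:ℝ) < 2^((j:ℤ)) := two_zpow_pos _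
    rw [e1, e2, e3]
    field_simp
    ring

lemma hh_step (N : ℕ) (x : ℝ) (hx : x < 2^(N+5)) :
    dyadicMax1 hh x = stepf (1/4) (3/4) (-1/2) (1/2) (-3/4) (-1/8) 1 N x := by
  rcases lt_or_ge x 0 with h0 | h0
  · rw [dmax_neg hh_zero_neg h0, stepf_eval_lt _ _ _ _ _ _ _ _ _ (by linarith)]
    rw [ind_zero h0, ind_zero (show x < 2 by linarith), ind_zero (show x < 3 by linarith),
      ind_zero (show x < 5 by linarith), ind_zero (show x < 6 by linarith),
      ind_zero (show x < 8 by linarith)]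
    norm_num
  rcases lt_or_ge x 2 with h2 | h2
  · rw [dmax_hh_02 h0 h2, stepf_eval_lt _ _ _ _ _ _ _ _ _ (by linarith)]
    rw [ind_one h0, ind_zero h2, ind_zero (show x < 3 by linarith),
      ind_zero (show x < 5 by linarith), ind_zero (show x < 6 by linarith),
      ind_zero (show x < 8 by linarith)]
    ring
  rcases lt_or_ge x 3 with h3 | h3
  · rw [dmax_hh_23 h2 h3, stepf_eval_lt _ _ _ _ _ _ _ _ _ (by linarith)]
    rw [ind_one h0, ind_one h2, ind_zero h3, ind_zero (show x < 5 by linarith),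
      ind_zero (show x < 6 by linarith), ind_zero (show x < 8 by linarith)]
    ring
  rcases lt_or_ge x 4 with h4 | h4
  · rw [dmax_hh_34 h3 h4, stepf_eval_lt _ _ _ _ _ _ _ _ _ (by linarith)]
    rw [ind_one h0, ind_one h2, ind_one h3, ind_zero (show x < 5 by linarith),
      ind_zero (show x < 6 by linarith), ind_zero (show x < 8 by linarith)]
    ring
  rcases lt_or_ge x 5 with h5 | h5
  · rw [dmax_hh_45 h4 h5, stepf_eval_lt _ _ _ _ _ _ _ _ _ (by linarith)]
    rw [ind_one h0, ind_one h2, ind_one h3, ind_zero h5,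
      ind_zero (show x < 6 by linarith), ind_zero (show x < 8 by linarith)]
    ring
  rcases lt_or_ge x 6 with h6 | h6
  · rw [dmax_hh_56 h5 h6, stepf_eval_lt _ _ _ _ _ _ _ _ _ (by linarith)]
    rw [ind_one h0, ind_one h2, ind_one h3, ind_one h5, ind_zero h6,
      ind_zero (show x < 8 by linarith)]
    ring
  rcases lt_or_ge x 8 with h8 | h8
  · rw [dmax_hh_68 h6 h8, stepf_eval_lt _ _ _ _ _ _ _ _ _ (by linarith)]
    rw [ind_one h0, ind_one h2, ind_one h3, ind_one h5, ind_one h6, ind_zero h8]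
    ring
  · obtain ⟨j, hj3, hjN, hx1, hx2⟩ := exists_level (N+1) x h8 (by
      rw [show (N+1)+4 = N+5 from rfl]; exact hx)
    have hz1 : (2:ℝ)^((j:ℤ)) ≤ x := by rw [zpow_natCast]; exact hx1
    have hz2 : x < (2:ℝ)^((j:ℤ)+1) := by
      rw [show ((j:ℤ)+1) = (((j+1):ℕ):ℤ) by push_cast; ring, zpow_natCast]
      exact hx2
    rw [dmax_tail hh_int hh_nonneg hh_zero_ge8 (by exact_mod_cast hj3) hz1 hz2, hh_S,
      stepf_tail _ _ _ _ _ _ _ _ j hj3 (by omega) x hx1 hx2]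
    have e1 : (2:ℝ)^((j:ℤ)+1) = 2^((j:ℤ)) * 2 := zpow_add_one₀ two_ne_zero _
    have e2 : (2:ℝ)^(-(j:ℤ)) = ((2:ℝ)^((j:ℤ)))⁻¹ := zpow_neg 2 _
    have e3 : (2:ℝ)^(-3:ℤ) = 1/8 := by norm_num
    have hpos : (0:ℝ) < 2^((j:ℤ)) := two_zpow_pos _
    rw [e1, e2, e3]
    field_simp
    ring

lemma fgh_step (N : ℕ) (x : ℝ) (hx : x < 2^(N+5)) :
    dyadicMax1 (gg + hh) x = stepf 1 1 (-1) 1 (-1) (-1/2) 4 N x := by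
  rcases lt_or_ge x 0 with h0 | h0
  · rw [dmax_neg fgh_zero_neg h0, stepf_eval_lt _ _ _ _ _ _ _ _ _ (by linarith)]
    rw [ind_zero h0, ind_zero (show x < 2 by linarith), ind_zero (show x < 3 by linarith),
      ind_zero (show x < 5 by linarith), ind_zero (show x < 6 by linarith),
      ind_zero (show x < 8 by linarith)]
    norm_num
  rcases lt_or_ge x 2 with h2 | h2
  · rw [dmax_fgh_02 h0 h2, stepf_eval_lt _ _ _ _ _ _ _ _ _ (by linarith)]
    rw [ind_one h0, ind_zero h2, ind_zero (show x < 3 by linarith),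
      ind_zero (show x < 5 by linarith), ind_zero (show x < 6 by linarith),
      ind_zero (show x < 8 by linarith)]
    ring
  rcases lt_or_ge x 3 with h3 | h3
  · rw [dmax_fgh_23 h2 h3, stepf_eval_lt _ _ _ _ _ _ _ _ _ (by linarith)]
    rw [ind_one h0, ind_one h2, ind_zero h3, ind_zero (show x < 5 by linarith),
      ind_zero (show x < 6 by linarith), ind_zero (show x < 8 by linarith)]
    ring
  rcases lt_or_ge x 4 with h4 | h4
  · rw [dmax_fgh_34 h3 h4, stepf_eval_lt _ _ _ _ _ _ _ _ _ (by linarith)]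
    rw [ind_one h0, ind_one h2, ind_one h3, ind_zero (show x < 5 by linarith),
      ind_zero (show x < 6 by linarith), ind_zero (show x < 8 by linarith)]
    ring
  rcases lt_or_ge x 5 with h5 | h5
  · rw [dmax_fgh_45 h4 h5, stepf_eval_lt _ _ _ _ _ _ _ _ _ (by linarith)]
    rw [ind_one h0, ind_one h2, ind_one h3, ind_zero h5,
      ind_zero (show x < 6 by linarith), ind_zero (show x < 8 by linarith)]
    ring
  rcases lt_or_ge x 6 with h6 | h6
  · rw [dmax_fgh_56 h5 h6, stepf_eval_lt _ _ _ _ _ _ _ _ _ (by linarith)]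
    rw [ind_one h0, ind_one h2, ind_one h3, ind_one h5, ind_zero h6,
      ind_zero (show x < 8 by linarith)]
    ring
  rcases lt_or_ge x 8 with h8 | h8
  · rw [dmax_fgh_68 h6 h8, stepf_eval_lt _ _ _ _ _ _ _ _ _ (by linarith)]
    rw [ind_one h0, ind_one h2, ind_one h3, ind_one h5, ind_one h6, ind_zero h8]
    ring
  · obtain ⟨j, hj3, hjN, hx1, hx2⟩ := exists_level (N+1) x h8 (by
      rw [show (N+1)+4 = N+5 from rfl]; exact hx)
    have hz1 : (2:ℝ)^((j:ℤ)) ≤ x := by rw [zpow_natCast]; exact hx1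
    have hz2 : x < (2:ℝ)^((j:ℤ)+1) := by
      rw [show ((j:ℤ)+1) = (((j+1):ℕ):ℤ) by push_cast; ring, zpow_natCast]
      exact hx2
    rw [dmax_tail fgh_int fgh_nonneg fgh_zero_ge8 (by exact_mod_cast hj3) hz1 hz2, fgh_S,
      stepf_tail _ _ _ _ _ _ _ _ j hj3 (by omega) x hx1 hx2]
    have e1 : (2:ℝ)^((j:ℤ)+1) = 2^((j:ℤ)) * 2 := zpow_add_one₀ two_ne_zero _
    have e2 : (2:ℝ)^(-(j:ℤ)) = ((2:ℝ)^((j:ℤ)))⁻¹ := zpow_neg 2 _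
    have e3 : (2:ℝ)^(-3:ℤ) = 1/8 := by norm_num
    have hpos : (0:ℝ) < 2^((j:ℤ)) := two_zpow_pos _
    rw [e1, e2, e3]
    field_simp
    ring


/-! ### the test functions -/

open Real


/-- test function family -/
def tphi (N : ℕ) (x : ℝ) : ℝ :=
  -smoothTransition (x+1) + 2*smoothTransition (x-2) - 2*smoothTransition ((x-3)/2)
    + 2*smoothTransition (x-5) - smoothTransition (x - 2^(N+4))

lemma tphi_contDiff (N : ℕ) : ContDiff ℝ 1 (tphi N) := by
  unfold tphi
  have h : ∀ a b : ℝ, ContDiff ℝ 1 (fun x : ℝ => smoothTransition (a*x + b)) := fun a b =>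
    smoothTransition.contDiff.comp ((contDiff_const.mul contDiff_id).add contDiff_const)
  have e1 : ContDiff ℝ 1 (fun x : ℝ => smoothTransition (x+1)) := by
    have := h 1 1; simpa using this
  have e2 : ContDiff ℝ 1 (fun x : ℝ => smoothTransition (x-2)) := by
    have := h 1 (-2); simp only [one_mul] at this; convert this using 2 <;> ring
  have e3 : ContDiff ℝ 1 (fun x : ℝ => smoothTransition ((x-3)/2)) := by
    have := h (1/2) (-3/2); convert this using 2 <;> ring
  have e4 : ContDiff ℝ 1 (fun x : ℝ => smoothTransition (x-5)) := by
    have := h 1 (-5); simp only [one_mul] at this; convert this using 2 <;> ring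
  have e5 : ContDiff ℝ 1 (fun x : ℝ => smoothTransition (x-2^(N+4))) := by
    have := h 1 (-2^(N+4)); simp only [one_mul] at this; convert this using 2 <;> ring
  exact ((((e1.neg).add ((contDiff_const.mul e2))).sub (contDiff_const.mul e3)).add
    (contDiff_const.mul e4)).sub e5

lemma tphi_zero_of_le (N : ℕ) {x : ℝ} (hx : x ≤ -1) : tphi N x = 0 := by
  unfold tphi
  rw [smoothTransition.zero_of_nonpos (by linarith), smoothTransition.zero_of_nonpos (by linarith),
    smoothTransition.zero_of_nonpos (by linarith), smoothTransition.zero_of_nonpos (by linarith),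
    smoothTransition.zero_of_nonpos ?_]
  · ring
  · have : (1:ℝ) ≤ 2^(N+4) := one_le_pow₀ (by norm_num)
    linarith

lemma tphi_zero_of_ge (N : ℕ) {x : ℝ} (hx : 2^(N+4) + 1 ≤ x) : tphi N x = 0 := by
  unfold tphi
  have h16 : (16:ℝ) ≤ 2^(N+4) := by
    calc (16:ℝ) = 2^4 := by norm_num
    _ ≤ 2^(N+4) := by apply pow_le_pow_right₀ (by norm_num); omega
  rw [smoothTransition.one_of_one_le (by linarith), smoothTransition.one_of_one_le (by linarith),
    smoothTransition.one_of_one_le (by linarith), smoothTransition.one_of_one_le (by linarith),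
    smoothTransition.one_of_one_le (by linarith)]
  ring

lemma tphi_abs_le (N : ℕ) (x : ℝ) : |tphi N x| ≤ 1 := by
  have h16 : (16:ℝ) ≤ 2^(N+4) := by
    calc (16:ℝ) = 2^4 := by norm_num
    _ ≤ 2^(N+4) := by apply pow_le_pow_right₀ (by norm_num); omega
  have n1 := fun y : ℝ => smoothTransition.nonneg y
  have l1 := fun y : ℝ => smoothTransition.le_one y
  unfold tphi
  rcases le_or_gt x 2 with h | h
  · rw [smoothTransition.zero_of_nonpos (show x-2 ≤ 0 by linarith),
      smoothTransition.zero_of_nonpos (show (x-3)/2 ≤ 0 by linarith),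
      smoothTransition.zero_of_nonpos (show x-5 ≤ 0 by linarith),
      smoothTransition.zero_of_nonpos (show x-2^(N+4) ≤ 0 by linarith)]
    have := n1 (x+1); have := l1 (x+1); rw [abs_le]; constructor <;> linarith
  rcases le_or_gt x 3 with h2 | h2
  · rw [smoothTransition.one_of_one_le (show (1:ℝ) ≤ x+1 by linarith),
      smoothTransition.zero_of_nonpos (show (x-3)/2 ≤ 0 by linarith),
      smoothTransition.zero_of_nonpos (show x-5 ≤ 0 by linarith),
      smoothTransition.zero_of_nonpos (show x-2^(N+4) ≤ 0 by linarith)]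
    have := n1 (x-2); have := l1 (x-2); rw [abs_le]; constructor <;> linarith
  rcases le_or_gt x 5 with h3 | h3
  · rw [smoothTransition.one_of_one_le (show (1:ℝ) ≤ x+1 by linarith),
      smoothTransition.one_of_one_le (show (1:ℝ) ≤ x-2 by linarith),
      smoothTransition.zero_of_nonpos (show x-5 ≤ 0 by linarith),
      smoothTransition.zero_of_nonpos (show x-2^(N+4) ≤ 0 by linarith)]
    have := n1 ((x-3)/2); have := l1 ((x-3)/2); rw [abs_le]; constructor <;> linarith
  rcases le_or_gt x (2^(N+4)) with h4 | h4
  · rw [smoothTransition.one_of_one_le (show (1:ℝ) ≤ x+1 by linarith),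
      smoothTransition.one_of_one_le (show (1:ℝ) ≤ x-2 by linarith),
      smoothTransition.one_of_one_le (show (1:ℝ) ≤ (x-3)/2 by linarith),
      smoothTransition.zero_of_nonpos (show x-2^(N+4) ≤ 0 by linarith)]
    have := n1 (x-5); have := l1 (x-5); rw [abs_le]; constructor <;> linarith
  · rw [smoothTransition.one_of_one_le (show (1:ℝ) ≤ x+1 by linarith),
      smoothTransition.one_of_one_le (show (1:ℝ) ≤ x-2 by linarith),
      smoothTransition.one_of_one_le (show (1:ℝ) ≤ (x-3)/2 by linarith),
      smoothTransition.one_of_one_le (show (1:ℝ) ≤ x-5 by linarith)]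
    have := n1 (x-2^(N+4)); have := l1 (x-2^(N+4)); rw [abs_le]; constructor <;> linarith

lemma tphi_compactSupport (N : ℕ) : HasCompactSupport (tphi N) := by
  apply HasCompactSupport.intro (isCompact_Icc (a := (-1:ℝ)) (b := 2^(N+4)+1))
  intro x hx
  simp only [Set.mem_Icc, not_and_or, not_le] at hx
  rcases hx with h | h
  · exact tphi_zero_of_le N h.le
  · exact tphi_zero_of_ge N h.le


lemma key_ftc (φ : ℝ → ℝ) (h1 : ContDiff ℝ 1 φ) (h2 : HasCompactSupport φ) (q : ℝ) :
    ∫ x in Set.Ioi q, deriv φ x = - φ q := by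
  have hc : Continuous (deriv φ) := (h1.iterate_deriv' 0 1).continuous
  have hint : IntegrableOn (deriv φ) (Set.Ioi q) :=
    (hc.integrable_of_hasCompactSupport h2.deriv).integrableOn
  have htend : Tendsto φ atTop (nhds 0) := h2.is_zero_at_infty.mono_left _root_.atTop_le_cocompact
  have := MeasureTheory.integral_Ioi_of_hasDerivAt_of_tendsto' (f := φ) (f' := deriv φ) (a := q)
    (m := 0) (fun x _ => (h1.differentiable one_ne_zero).differentiableAt.hasDerivAt) hint htend
  simpa using this

lemma ind_mul_eq (φ : ℝ → ℝ) (q : ℝ) :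
    (fun x => ind q x * deriv φ x) = (Set.Ici q).indicator (deriv φ) := by
  funext x
  by_cases h : q ≤ x
  · rw [ind_one h, one_mul, Set.indicator_of_mem (Set.mem_Ici.2 h)]
  · rw [ind_zero (not_le.1 h), zero_mul, Set.indicator_of_notMem (by simpa using h)]

lemma ind_deriv_integrable (φ : ℝ → ℝ) (h1 : ContDiff ℝ 1 φ) (h2 : HasCompactSupport φ) (q : ℝ) :
    Integrable (fun x => ind q x * deriv φ x) := by
  rw [ind_mul_eq]
  exact (((h1.iterate_deriv' 0 1).continuous).integrable_of_hasCompactSupport h2.deriv).indicator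
    measurableSet_Ici

lemma integral_ind_deriv (φ : ℝ → ℝ) (h1 : ContDiff ℝ 1 φ) (h2 : HasCompactSupport φ) (q : ℝ) :
    ∫ x, ind q x * deriv φ x = - φ q := by
  rw [ind_mul_eq, integral_indicator measurableSet_Ici, integral_Ici_eq_integral_Ioi,
    key_ftc φ h1 h2 q]

lemma integral_stepf (a0 a2 a3 a5 a6 a8 c : ℝ) (N : ℕ) (φ : ℝ → ℝ)
    (h1 : ContDiff ℝ 1 φ) (h2 : HasCompactSupport φ) :
    ∫ x, stepf a0 a2 a3 a5 a6 a8 c N x * deriv φ x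
      = -(a0 * φ 0 + a2 * φ 2 + a3 * φ 3 + a5 * φ 5 + a6 * φ 6 + a8 * φ 8)
        + ∑ k ∈ Finset.range (N+1), c * (2:ℝ)^(-(k:ℤ)-4) * φ ((2:ℝ)^(k+4)) := by
  have hI := ind_deriv_integrable φ h1 h2
  have expand : (fun x => stepf a0 a2 a3 a5 a6 a8 c N x * deriv φ x)
      = fun x => (a0 * (ind 0 x * deriv φ x) + a2 * (ind 2 x * deriv φ x)
        + a3 * (ind 3 x * deriv φ x) + a5 * (ind 5 x * deriv φ x)
        + a6 * (ind 6 x * deriv φ x) + a8 * (ind 8 x * deriv φ x))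
        - ∑ k ∈ Finset.range (N+1),
            (c * (2:ℝ)^(-(k:ℤ)-4)) * (ind ((2:ℝ)^(k+4)) x * deriv φ x) := by
    funext x
    unfold stepf
    rw [sub_mul, Finset.sum_mul]
    congr 1
    · ring
    · apply Finset.sum_congr rfl
      intro k _
      ring
  have p2 : Integrable (fun x => a0 * (ind 0 x * deriv φ x) + a2 * (ind 2 x * deriv φ x)) volume :=
    ((hI 0).const_mul a0).add ((hI 2).const_mul a2)
  have p3 : Integrable (fun x => a0 * (ind 0 x * deriv φ x) + a2 * (ind 2 x * deriv φ x)
      + a3 * (ind 3 x * deriv φ x)) volume := p2.add ((hI 3).const_mul a3)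
  have p5 : Integrable (fun x => a0 * (ind 0 x * deriv φ x) + a2 * (ind 2 x * deriv φ x)
      + a3 * (ind 3 x * deriv φ x) + a5 * (ind 5 x * deriv φ x)) volume :=
    p3.add ((hI 5).const_mul a5)
  have p6 : Integrable (fun x => a0 * (ind 0 x * deriv φ x) + a2 * (ind 2 x * deriv φ x)
      + a3 * (ind 3 x * deriv φ x) + a5 * (ind 5 x * deriv φ x)
      + a6 * (ind 6 x * deriv φ x)) volume := p5.add ((hI 6).const_mul a6)
  have p8 : Integrable (fun x => a0 * (ind 0 x * deriv φ x) + a2 * (ind 2 x * deriv φ x)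
      + a3 * (ind 3 x * deriv φ x) + a5 * (ind 5 x * deriv φ x)
      + a6 * (ind 6 x * deriv φ x) + a8 * (ind 8 x * deriv φ x)) volume :=
    p6.add ((hI 8).const_mul a8)
  have hItail : Integrable (fun x => ∑ k ∈ Finset.range (N+1),
      (c * (2:ℝ)^(-(k:ℤ)-4)) * (ind ((2:ℝ)^(k+4)) x * deriv φ x)) :=
    integrable_finset_sum _ (fun k _ => (hI _).const_mul _)
  rw [expand, integral_sub p8 hItail, integral_finset_sum _ (fun k _ => (hI _).const_mul _),
    integral_add p6 ((hI 8).const_mul a8), integral_add p5 ((hI 6).const_mul a6),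
    integral_add p3 ((hI 5).const_mul a5), integral_add p2 ((hI 3).const_mul a3),
    integral_add ((hI 0).const_mul a0) ((hI 2).const_mul a2)]
  simp only [integral_const_mul, integral_ind_deriv φ h1 h2, mul_neg]
  rw [Finset.sum_neg_distrib]
  ring

/-! ### values of tphi -/

lemma tphi_h16 (N : ℕ) : (16:ℝ) ≤ 2^(N+4) := by
  calc (16:ℝ) = 2^(4:ℕ) := by norm_num
  _ ≤ 2^(N+4) := by apply pow_le_pow_right₀ one_le_two; omega

lemma tphi_0 (N : ℕ) : tphi N 0 = -1 := by
  have h16 := tphi_h16 N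
  unfold tphi
  rw [smoothTransition.one_of_one_le (by norm_num), smoothTransition.zero_of_nonpos (by norm_num),
    smoothTransition.zero_of_nonpos (by norm_num), smoothTransition.zero_of_nonpos (by norm_num),
    smoothTransition.zero_of_nonpos (by linarith)]
  ring

lemma tphi_2 (N : ℕ) : tphi N 2 = -1 := by
  have h16 := tphi_h16 N
  unfold tphi
  rw [smoothTransition.one_of_one_le (by norm_num), smoothTransition.zero_of_nonpos (by norm_num),
    smoothTransition.zero_of_nonpos (by norm_num), smoothTransition.zero_of_nonpos (by norm_num),
    smoothTransition.zero_of_nonpos (by linarith)]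
  ring

lemma tphi_3 (N : ℕ) : tphi N 3 = 1 := by
  have h16 := tphi_h16 N
  unfold tphi
  rw [smoothTransition.one_of_one_le (by norm_num), smoothTransition.one_of_one_le (by norm_num),
    smoothTransition.zero_of_nonpos (by norm_num), smoothTransition.zero_of_nonpos (by norm_num),
    smoothTransition.zero_of_nonpos (by linarith)]
  ring

lemma tphi_5 (N : ℕ) : tphi N 5 = -1 := by
  have h16 := tphi_h16 N
  unfold tphi
  rw [smoothTransition.one_of_one_le (by norm_num), smoothTransition.one_of_one_le (by norm_num),
    smoothTransition.one_of_one_le (by norm_num), smoothTransition.zero_of_nonpos (by norm_num),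
    smoothTransition.zero_of_nonpos (by linarith)]
  ring

lemma tphi_6 (N : ℕ) : tphi N 6 = 1 := by
  have h16 := tphi_h16 N
  unfold tphi
  rw [smoothTransition.one_of_one_le (by norm_num), smoothTransition.one_of_one_le (by norm_num),
    smoothTransition.one_of_one_le (by norm_num), smoothTransition.one_of_one_le (by norm_num),
    smoothTransition.zero_of_nonpos (by linarith)]
  ring

lemma tphi_8 (N : ℕ) : tphi N 8 = 1 := by
  have h16 := tphi_h16 N
  unfold tphi
  rw [smoothTransition.one_of_one_le (by norm_num), smoothTransition.one_of_one_le (by norm_num),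
    smoothTransition.one_of_one_le (by norm_num), smoothTransition.one_of_one_le (by norm_num),
    smoothTransition.zero_of_nonpos (by linarith)]
  ring

lemma tphi_pow (N k : ℕ) (hk : k ≤ N) : tphi N ((2:ℝ)^(k+4)) = 1 := by
  have h16 := tphi_h16 k
  have hle : (2:ℝ)^(k+4) ≤ 2^(N+4) := pow_le_pow_right₀ one_le_two (by omega)
  unfold tphi
  rw [smoothTransition.one_of_one_le (by linarith), smoothTransition.one_of_one_le (by linarith),
    smoothTransition.one_of_one_le (by linarith), smoothTransition.one_of_one_le (by linarith),
    smoothTransition.zero_of_nonpos (by linarith)]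
  ring

/-! ### the generic variation computation -/

lemma var_stepf_eq (f : ℝ → ℝ) (a0 a2 a3 a5 a6 a8 c : ℝ)
    (s0 : 0 ≤ a0) (s2 : 0 ≤ a2) (s3 : a3 ≤ 0) (s5 : 0 ≤ a5) (s6 : a6 ≤ 0) (s8 : a8 ≤ 0)
    (sc : 0 ≤ c)
    (heq : ∀ (N : ℕ) (x : ℝ), x < 2^(N+5) → f x = stepf a0 a2 a3 a5 a6 a8 c N x) :
    var1 Set.univ f = ENNReal.ofReal (a0+a2-a3+a5-a6-a8+c/8) := by
  set V := a0+a2-a3+a5-a6-a8+c/8 with hV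
  have key : ∀ (N : ℕ) (φ : ℝ → ℝ), ContDiff ℝ 1 φ → HasCompactSupport φ →
      (∀ x, 2^(N+4)+1 ≤ x → φ x = 0) →
      ∫ x in Set.univ, f x * deriv φ x
        = -(a0 * φ 0 + a2 * φ 2 + a3 * φ 3 + a5 * φ 5 + a6 * φ 6 + a8 * φ 8)
          + ∑ k ∈ Finset.range (N+1), c * (2:ℝ)^(-(k:ℤ)-4) * φ ((2:ℝ)^(k+4)) := by
    intro N φ h1 h2 hsupp
    rw [setIntegral_univ]
    have hgap : (2:ℝ)^(N+4)+1 < 2^(N+5) := by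
      have h16 := tphi_h16 N
      have : (2:ℝ)^(N+5) = 2 * 2^(N+4) := by rw [pow_succ]; ring
      linarith
    have hptw : ∀ x, f x * deriv φ x = stepf a0 a2 a3 a5 a6 a8 c N x * deriv φ x := by
      intro x
      rcases lt_or_ge x (2^(N+5)) with hx | hx
      · rw [heq N x hx]
      · have hd : deriv φ x = 0 := by
          have hmem : Set.Ioi ((2:ℝ)^(N+4)+1) ∈ nhds x := Ioi_mem_nhds (by linarith)
          have heq0 : φ =ᶠ[nhds x] (fun _ => 0) :=
            Filter.eventuallyEq_of_mem hmem (fun y hy => hsupp y (le_of_lt hy))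
          rw [heq0.deriv_eq, deriv_const]
        rw [hd, mul_zero, mul_zero]
    rw [show (fun x => f x * deriv φ x) = (fun x => stepf a0 a2 a3 a5 a6 a8 c N x * deriv φ x)
      from funext hptw]
    exact integral_stepf a0 a2 a3 a5 a6 a8 c N φ h1 h2
  apply le_antisymm
  · apply iSup₂_le
    intro φ hφ
    obtain ⟨h1, h2, _, hb⟩ := hφ
    obtain ⟨R, hR⟩ := h2.isBounded.subset_closedBall 0
    obtain ⟨N, hN⟩ := pow_unbounded_of_one_lt (R+1) (one_lt_two (α := ℝ))
    have hsupp : ∀ x, (2:ℝ)^(N+4)+1 ≤ x → φ x = 0 := by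
      intro x hx
      have hpow : (2:ℝ)^N ≤ 2^(N+4) := pow_le_pow_right₀ one_le_two (by omega)
      apply image_eq_zero_of_notMem_tsupport
      intro hmem
      have h3 := hR hmem
      rw [Real.closedBall_eq_Icc] at h3
      have := h3.2
      linarith
    rw [key N φ h1 h2 hsupp]
    apply ENNReal.ofReal_le_ofReal
    have b0 := abs_le.1 (hb 0)
    have b2 := abs_le.1 (hb 2)
    have b3 := abs_le.1 (hb 3)
    have b5 := abs_le.1 (hb 5)
    have b6 := abs_le.1 (hb 6)
    have b8 := abs_le.1 (hb 8)
    have e0 : a0 * -φ 0 ≤ a0 * 1 := mul_le_mul_of_nonneg_left (by linarith [b0.1]) s0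
    have e2 : a2 * -φ 2 ≤ a2 * 1 := mul_le_mul_of_nonneg_left (by linarith [b2.1]) s2
    have e3 : (-a3) * φ 3 ≤ (-a3) * 1 := mul_le_mul_of_nonneg_left b3.2 (by linarith)
    have e5 : a5 * -φ 5 ≤ a5 * 1 := mul_le_mul_of_nonneg_left (by linarith [b5.1]) s5
    have e6 : (-a6) * φ 6 ≤ (-a6) * 1 := mul_le_mul_of_nonneg_left b6.2 (by linarith)
    have e8 : (-a8) * φ 8 ≤ (-a8) * 1 := mul_le_mul_of_nonneg_left b8.2 (by linarith)
    have hsum : ∑ k ∈ Finset.range (N+1), c * (2:ℝ)^(-(k:ℤ)-4) * φ ((2:ℝ)^(k+4)) ≤ c/8 := by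
      have step1 : ∑ k ∈ Finset.range (N+1), c * (2:ℝ)^(-(k:ℤ)-4) * φ ((2:ℝ)^(k+4))
          ≤ ∑ k ∈ Finset.range (N+1), c * (2:ℝ)^(-(k:ℤ)-4) := by
        apply Finset.sum_le_sum
        intro k _
        have hw : (0:ℝ) ≤ c * (2:ℝ)^(-(k:ℤ)-4) := by positivity
        have := (abs_le.1 (hb ((2:ℝ)^(k+4)))).2
        exact mul_le_of_le_one_right hw this
      have step2 : ∑ k ∈ Finset.range (N+1), c * (2:ℝ)^(-(k:ℤ)-4)
          = c * ((2:ℝ)^(-3:ℤ) - (2:ℝ)^(-(((N+1):ℕ):ℤ)-3)) := by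
        rw [← Finset.mul_sum, geom_aux]
      have hpos : (0:ℝ) < (2:ℝ)^(-(((N+1):ℕ):ℤ)-3) := by positivity
      have h8 : (2:ℝ)^(-3:ℤ) = 1/8 := by norm_num
      rw [h8] at step2
      have hfin : c * ((1:ℝ)/8 - (2:ℝ)^(-(((N+1):ℕ):ℤ)-3)) ≤ c/8 := by
        nlinarith [mul_nonneg sc hpos.le]
      linarith
    have final : -(a0 * φ 0 + a2 * φ 2 + a3 * φ 3 + a5 * φ 5 + a6 * φ 6 + a8 * φ 8)
        ≤ a0+a2-a3+a5-a6-a8 := by nlinarith [e0, e2, e3, e5, e6, e8]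
    rw [hV]
    linarith [final, hsum]
  · have mem : ∀ N : ℕ, tphi N ∈ {φ : ℝ → ℝ | ContDiff ℝ 1 φ ∧ HasCompactSupport φ ∧
        tsupport φ ⊆ Set.univ ∧ ∀ x, |φ x| ≤ 1} :=
      fun N => ⟨tphi_contDiff N, tphi_compactSupport N, Set.subset_univ _, tphi_abs_le N⟩
    have hval : ∀ N : ℕ, ∫ x in Set.univ, f x * deriv (tphi N) x
        = V - c * (2:ℝ)^(-(N:ℤ)-4) := by
      intro N
      rw [key N (tphi N) (tphi_contDiff N) (tphi_compactSupport N)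
        (fun x hx => tphi_zero_of_ge N hx)]
      rw [tphi_0, tphi_2, tphi_3, tphi_5, tphi_6, tphi_8]
      have hsum : ∑ k ∈ Finset.range (N+1), c * (2:ℝ)^(-(k:ℤ)-4) * tphi N ((2:ℝ)^(k+4))
          = c * ((2:ℝ)^(-3:ℤ) - (2:ℝ)^(-(((N+1):ℕ):ℤ)-3)) := by
        rw [Finset.sum_congr rfl (fun k hk => by
          rw [tphi_pow N k (by simpa using Nat.lt_succ_iff.1 (Finset.mem_range.1 hk)), mul_one]),
          ← Finset.mul_sum, geom_aux]
      rw [hsum]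
      have h8 : (2:ℝ)^(-3:ℤ) = 1/8 := by norm_num
      have hE : (-(((N+1):ℕ):ℤ)-3) = -(N:ℤ)-4 := by push_cast; ring
      rw [h8, hE, hV]
      ring
    have hle : ∀ N : ℕ, ENNReal.ofReal (V - c * (2:ℝ)^(-(N:ℤ)-4)) ≤ var1 Set.univ f := by
      intro N
      have h := le_iSup₂ (f := fun (φ : ℝ → ℝ) (_ : φ ∈ {φ : ℝ → ℝ | ContDiff ℝ 1 φ ∧
        HasCompactSupport φ ∧ tsupport φ ⊆ Set.univ ∧ ∀ x, |φ x| ≤ 1}) =>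
        ENNReal.ofReal (∫ x in Set.univ, f x * deriv φ x)) (tphi N) (mem N)
      rw [hval N] at h
      exact h
    have htd : Tendsto (fun N : ℕ => ENNReal.ofReal (V - c*(2:ℝ)^(-(N:ℤ)-4))) atTop
        (nhds (ENNReal.ofReal V)) := by
      apply ENNReal.tendsto_ofReal
      have e : ∀ N : ℕ, c * (2:ℝ)^(-(N:ℤ)-4) = (c/16) * ((1:ℝ)/2)^N := by
        intro N
        have hp : (0:ℝ) < 2^N := by positivity
        rw [show (-(N:ℤ)-4) = -(((N+4:ℕ)):ℤ) by push_cast; ring, zpow_neg, zpow_natCast, pow_add,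
          div_pow, one_pow]
        field_simp
        ring
      have h2 : Tendsto (fun N : ℕ => c * (2:ℝ)^(-(N:ℤ)-4)) atTop (nhds 0) := by
        rw [funext e]
        have := (tendsto_pow_atTop_nhds_zero_of_lt_one
          (by norm_num : (0:ℝ) ≤ 1/2) (by norm_num : (1:ℝ)/2 < 1)).const_mul (c/16)
        simpa using this
      have := Filter.Tendsto.sub
        (tendsto_const_nhds : Tendsto (fun _ : ℕ => V) atTop (nhds V)) h2
      simpa using this
    exact le_of_tendsto htd (Filter.Eventually.of_forall hle)

/-! ### the three variations -/

lemma var_gg : var1 Set.univ (dyadicMax1 gg) = ENNReal.ofReal (5/2) := by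
  have := var_stepf_eq (dyadicMax1 gg) 1 0 (-1/4) (1/4) 0 (-5/8) 3
    (by norm_num) (by norm_num) (by norm_num) (by norm_num) (by norm_num) (by norm_num)
    (by norm_num) (fun N x hx => gg_step N x hx)
  rw [this]
  norm_num

lemma var_hh : var1 Set.univ (dyadicMax1 hh) = ENNReal.ofReal 3 := by
  have := var_stepf_eq (dyadicMax1 hh) (1/4) (3/4) (-1/2) (1/2) (-3/4) (-1/8) 1
    (by norm_num) (by norm_num) (by norm_num) (by norm_num) (by norm_num) (by norm_num)
    (by norm_num) (fun N x hx => hh_step N x hx)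
  rw [this]
  norm_num

lemma var_fgh : var1 Set.univ (dyadicMax1 (gg + hh)) = ENNReal.ofReal 6 := by
  have := var_stepf_eq (dyadicMax1 (gg + hh)) 1 1 (-1) 1 (-1) (-1/2) 4
    (by norm_num) (by norm_num) (by norm_num) (by norm_num) (by norm_num) (by norm_num)
    (by norm_num) (fun N x hx => fgh_step N x hx)
  rw [this]
  norm_num

lemma ofReal_52 : ENNReal.ofReal (5/2 : ℝ) = (5/2 : ℝ≥0∞) := by
  rw [ENNReal.ofReal_div_of_pos] <;> norm_num

lemma ofReal_3 : ENNReal.ofReal (3 : ℝ) = (3 : ℝ≥0∞) := by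
  norm_num

lemma ofReal_6 : ENNReal.ofReal (6 : ℝ) = (6 : ℝ≥0∞) := by
  norm_num

lemma final_lt : (5/2 : ℝ≥0∞) + 3 < 6 := by
  rw [← ofReal_52, ← ofReal_3, ← ofReal_6, ← ENNReal.ofReal_add (by norm_num) (by norm_num)]
  rw [ENNReal.ofReal_lt_ofReal_iff (by norm_num)]
  norm_num

/-- With `g = 1_{[0,3)} + 1_{[5,8)}` and `h = 1_{[2,3)} + 1_{[5,6)}` one has
`var (M g) = 5/2`, `var (M h) = 3` and `var (M (g+h)) = 6 > 5/2 + 3`; in particular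
`f ↦ var (M f)` is not subadditive. -/
theorem var_dyadicMax_not_subadditive :
    let g : ℝ → ℝ := (Set.Ico (0:ℝ) 3).indicator 1 + (Set.Ico (5:ℝ) 8).indicator 1
    let h : ℝ → ℝ := (Set.Ico (2:ℝ) 3).indicator 1 + (Set.Ico (5:ℝ) 6).indicator 1
    var1 Set.univ (dyadicMax1 g) = 5/2 ∧
    var1 Set.univ (dyadicMax1 h) = 3 ∧
    var1 Set.univ (dyadicMax1 (g + h)) = 6 ∧
    var1 Set.univ (dyadicMax1 g) + var1 Set.univ (dyadicMax1 h) <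
      var1 Set.univ (dyadicMax1 (g + h)) ∧
    ¬ (∀ f₁ f₂ : ℝ → ℝ, var1 Set.univ (dyadicMax1 (f₁ + f₂)) ≤
        var1 Set.univ (dyadicMax1 f₁) + var1 Set.univ (dyadicMax1 f₂)) := by
  intro g h
  have hg : g = gg := rfl
  have hh' : h = hh := rfl
  have e1 : var1 Set.univ (dyadicMax1 g) = 5/2 := by
    rw [hg, var_gg, ofReal_52]
  have e2 : var1 Set.univ (dyadicMax1 h) = 3 := by
    rw [hh', var_hh, ofReal_3]
  have e3 : var1 Set.univ (dyadicMax1 (g + h)) = 6 := by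
    rw [show g + h = gg + hh from rfl, var_fgh, ofReal_6]
  have e4 : var1 Set.univ (dyadicMax1 g) + var1 Set.univ (dyadicMax1 h) <
      var1 Set.univ (dyadicMax1 (g + h)) := by
    rw [e1, e2, e3]
    exact final_lt
  refine ⟨e1, e2, e3, e4, ?_⟩
  intro H
  have := H g h
  exact absurd this (not_le.mpr e4)

end
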